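/- arXiv:0709.3452 — 3 statements merged into one kernel-verified Lean document; each statement's English description precedes it below -/
import Mathlib

section
/- Let A be an artin algebra. The class of finitely generated Gorenstein-projective left A-modules is closed under extensions: if 0 → M' → M → M'' → 0 is a short exact sequence of finitely generated A-modules with M' and M'' Gorenstein-projective, then M is Gorenstein-projective. -/
open CategoryTheory DirectSum

universe u

/-- A left module `M` over `A` is **Gorenstein-projective** if it is the 0-th cocycle
of a totally acyclic complex of projective `A`-modules: an acyclic complex of projectives
such that both Hom-complexes `Hom_A(Q, P^•)` and `Hom_A(P^•, Q)` are exact for every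
projective module `Q`. -/
def IsGorensteinProjective (A : Type u) [Ring A] (M : Type u) [AddCommGroup M]
    [Module A M] : Prop :=
  ∃ (P : ℤ → ModuleCat.{u} A) (d : ∀ n : ℤ, P n ⟶ P (n + 1)),
    (∀ n : ℤ, Module.Projective A (P n)) ∧
    (∀ n : ℤ, LinearMap.range (d n).hom = LinearMap.ker (d (n + 1)).hom) ∧
    (∀ (Q : ModuleCat.{u} A), Module.Projective A Q →
      (∀ (n : ℤ) (f : Q ⟶ P (n + 1)), f ≫ d (n + 1) = 0 → ∃ g : Q ⟶ P n, g ≫ d n = f) ∧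
      (∀ (n : ℤ) (f : P (n + 1) ⟶ Q), d n ≫ f = 0 →
        ∃ g : P (n + 1 + 1) ⟶ Q, d (n + 1) ≫ g = f)) ∧
    Nonempty (M ≃ₗ[A] LinearMap.ker (d 0).hom)

/-- A finitely generated module `M` is **(finitely generated) Gorenstein-projective**
if it is the 0-th cocycle of a totally acyclic complex of finitely generated projective
`A`-modules, where total acyclicity is tested against finitely generated projectives. -/
def IsFgGorensteinProjective (A : Type u) [Ring A] (M : Type u) [AddCommGroup M]
    [Module A M] : Prop :=
  ∃ (P : ℤ → ModuleCat.{u} A) (d : ∀ n : ℤ, P n ⟶ P (n + 1)),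
    (∀ n : ℤ, Module.Finite A (P n)) ∧
    (∀ n : ℤ, Module.Projective A (P n)) ∧
    (∀ n : ℤ, LinearMap.range (d n).hom = LinearMap.ker (d (n + 1)).hom) ∧
    (∀ (Q : ModuleCat.{u} A), Module.Finite A Q → Module.Projective A Q →
      (∀ (n : ℤ) (f : Q ⟶ P (n + 1)), f ≫ d (n + 1) = 0 → ∃ g : Q ⟶ P n, g ≫ d n = f) ∧
      (∀ (n : ℤ) (f : P (n + 1) ⟶ Q), d n ≫ f = 0 →
        ∃ g : P (n + 1 + 1) ⟶ Q, d (n + 1) ≫ g = f)) ∧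
    Nonempty (M ≃ₗ[A] LinearMap.ker (d 0).hom)

/-- `M` has finite injective dimension over `A`: there is a finite injective
coresolution `0 → M → I^0 → I^1 → ⋯ → I^n → 0`. -/
def HasFiniteInjectiveDimension (A : Type u) [Ring A] (M : Type u) [AddCommGroup M]
    [Module A M] : Prop :=
  ∃ (n : ℕ) (I : ℕ → ModuleCat.{u} A) (d : ∀ i : ℕ, I i ⟶ I (i + 1)) (ι : M →ₗ[A] I 0),
    (∀ i, Module.Injective A (I i)) ∧
    Function.Injective ι ∧
    LinearMap.range ι = LinearMap.ker (d 0).hom ∧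
    (∀ i : ℕ, LinearMap.range (d i).hom = LinearMap.ker (d (i + 1)).hom) ∧
    (∀ i : ℕ, n < i → Subsingleton (I i))

/-- An artin algebra `A` is **Gorenstein** if the regular module `A` has finite injective
dimension both as a left and as a right `A`-module (right modules being left `Aᵐᵒᵖ`-modules). -/
def IsGorensteinAlgebra (A : Type u) [Ring A] : Prop :=
  HasFiniteInjectiveDimension A A ∧ HasFiniteInjectiveDimension Aᵐᵒᵖ Aᵐᵒᵖ

/-- A module is indecomposable if it is nonzero and admits no nontrivial direct sum
decomposition. -/
def IsIndecomposableModule (A : Type u) [Ring A] (M : Type u) [AddCommGroup M]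
    [Module A M] : Prop :=
  ¬ Subsingleton M ∧ ∀ (N₁ N₂ : Submodule A M), IsCompl N₁ N₂ → N₁ = ⊥ ∨ N₂ = ⊥

/-- An artin algebra is **CM-finite** if there are only finitely many isomorphism classes
of indecomposable finitely generated Gorenstein-projective modules. -/
def IsCMFinite (A : Type u) [Ring A] : Prop :=
  ∃ (m : ℕ) (G : Fin m → ModuleCat.{u} A),
    ∀ (M : ModuleCat.{u} A), IsFgGorensteinProjective A M → IsIndecomposableModule A M →
      ∃ i : Fin m, Nonempty (M ≃ₗ[A] G i)

/-- `X` is a direct sum of finitely generated Gorenstein-projective modules. -/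
def IsDirectSumOfFgGorensteinProjectives (A : Type u) [Ring A] (X : Type u)
    [AddCommGroup X] [Module A X] : Prop :=
  ∃ (ι : Type u) (M : ι → ModuleCat.{u} A),
    (∀ i, IsFgGorensteinProjective A (M i)) ∧ Nonempty (X ≃ₗ[A] ⨁ i : ι, (M i : Type u))

universe v

theorem int_rec_compat {T : ℤ → Type v} (C : ∀ n : ℤ, T n → T (n + 1) → Prop)
    (xm1 : T (-1)) (x0 : T 0) (hbase : C (-1) xm1 x0)
    (stepF : ∀ (n : ℤ) (x : T n) (y : T (n + 1)), C n x y → ∃ z : T (n + 1 + 1), C (n + 1) y z)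
    (stepB : ∀ (n : ℤ) (y : T (n + 1)) (z : T (n + 1 + 1)), C (n + 1) y z → ∃ x : T n, C n x y) :
    ∃ h : ∀ n : ℤ, T n, (∀ n : ℤ, C n (h n) (h (n + 1))) ∧ h 0 = x0 := by
  choose sF hsF using stepF
  choose sB hsB using stepB
  let F : ∀ k : ℕ, PSigma (fun x : T (k : ℤ) => PSigma fun y : T ((k : ℤ) + 1) => C (k : ℤ) x y) :=
    fun k => Nat.rec
      ⟨x0, sF (-1) xm1 x0 hbase, hsF (-1) xm1 x0 hbase⟩
      (fun k ih => ⟨ih.2.1, sF (k : ℤ) ih.1 ih.2.1 ih.2.2, hsF (k : ℤ) ih.1 ih.2.1 ih.2.2⟩) k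
  let B : ∀ k : ℕ, PSigma (fun x : T (Int.negSucc k) =>
      PSigma fun y : T (Int.negSucc k + 1) => C (Int.negSucc k) x y) :=
    fun k => Nat.rec
      ⟨xm1, x0, hbase⟩
      (fun k ih => ⟨sB (Int.negSucc (k + 1)) ih.1 ih.2.1 ih.2.2, ih.1,
        hsB (Int.negSucc (k + 1)) ih.1 ih.2.1 ih.2.2⟩) k
  refine ⟨fun n => match n with
    | .ofNat k => (F k).1
    | .negSucc k => (B k).1, ?_, rfl⟩
  intro n
  match n with
  | .ofNat k => exact (F k).2.2
  | .negSucc 0 => exact (B 0).2.2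
  | .negSucc (k + 1) => exact (B (k + 1)).2.2

theorem factor_through {A : Type u} [Ring A] {X Y Q : Type u}
    [AddCommGroup X] [Module A X] [AddCommGroup Y] [Module A Y] [AddCommGroup Q] [Module A Q]
    (u : X →ₗ[A] Y) (hu : Function.Surjective u) (v : X →ₗ[A] Q)
    (hle : LinearMap.ker u ≤ LinearMap.ker v) :
    ∃ w : Y →ₗ[A] Q, ∀ x, w (u x) = v x := by
  refine ⟨(Submodule.liftQ _ v hle).comp
    (LinearMap.quotKerEquivOfSurjective u hu).symm.toLinearMap, fun x => ?_⟩
  have h1 : (LinearMap.quotKerEquivOfSurjective u hu).symm (u x) = Submodule.Quotient.mk x := by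
    rw [LinearEquiv.symm_apply_eq]
    rfl
  simp [h1]

theorem pointwise_lift {A : Type u} [Ring A] (P : ℤ → ModuleCat.{u} A) (d : ∀ n : ℤ, P n ⟶ P (n + 1))
    (Q : ModuleCat.{u} A)
    (hax : (∀ (n : ℤ) (f : Q ⟶ P (n + 1)), f ≫ d (n + 1) = 0 → ∃ g : Q ⟶ P n, g ≫ d n = f))
    (n : ℤ) (f : ↥Q →ₗ[A] ↥(P (n + 1))) (hf : ∀ q, d (n + 1) (f q) = 0) :
    ∃ g : ↥Q →ₗ[A] ↥(P n), ∀ q, d n (g q) = f q := by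
  obtain ⟨g, hg⟩ := hax n (ModuleCat.ofHom f) (ModuleCat.hom_ext (LinearMap.ext hf))
  exact ⟨g.hom, fun q => LinearMap.congr_fun (congrArg ModuleCat.Hom.hom hg) q⟩

theorem pointwise_ext {A : Type u} [Ring A] (P : ℤ → ModuleCat.{u} A) (d : ∀ n : ℤ, P n ⟶ P (n + 1))
    (Q : ModuleCat.{u} A)
    (hax : (∀ (n : ℤ) (f : P (n + 1) ⟶ Q), d n ≫ f = 0 →
      ∃ g : P (n + 1 + 1) ⟶ Q, d (n + 1) ≫ g = f))
    (n : ℤ) (f : ↥(P (n + 1)) →ₗ[A] ↥Q) (hf : ∀ x, f (d n x) = 0) :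
    ∃ g : ↥(P (n + 1 + 1)) →ₗ[A] ↥Q, ∀ x, g (d (n + 1) x) = f x := by
  obtain ⟨g, hg⟩ := hax n (ModuleCat.ofHom f) (ModuleCat.hom_ext (LinearMap.ext hf))
  exact ⟨g.hom, fun x => LinearMap.congr_fun (congrArg ModuleCat.Hom.hom hg) x⟩

set_option maxHeartbeats 1600000 in
/-- The class of finitely generated Gorenstein-projective modules over an artin algebra
is closed under extensions. -/
theorem isFgGorensteinProjective_of_extension
    (R : Type u) [CommRing R] [IsArtinianRing R]
    (A : Type u) [Ring A] [Algebra R A] [Module.Finite R A]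
    (M' M M'' : Type u)
    [AddCommGroup M'] [Module A M'] [Module.Finite A M']
    [AddCommGroup M] [Module A M] [Module.Finite A M]
    [AddCommGroup M''] [Module A M''] [Module.Finite A M'']
    (f : M' →ₗ[A] M) (g : M →ₗ[A] M'')
    (hf : Function.Injective f) (hg : Function.Surjective g)
    (hfg : LinearMap.range f = LinearMap.ker g)
    (h' : IsFgGorensteinProjective A M') (h'' : IsFgGorensteinProjective A M'') :
    IsFgGorensteinProjective A M := by
  classical
  obtain ⟨P₁, d₁, fin₁, proj₁, ex₁, ax₁, ⟨e₁⟩⟩ := h'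
  obtain ⟨P₂, d₂, fin₂, proj₂, ex₂, ax₂, ⟨e₂⟩⟩ := h''
  have dd₁ : ∀ (n : ℤ) (x : P₁ n), d₁ (n + 1) (d₁ n x) = 0 := by
    intro n x
    have hx : d₁ n x ∈ LinearMap.range (d₁ n).hom := ⟨x, rfl⟩
    rw [ex₁ n] at hx; exact hx
  have dd₂ : ∀ (n : ℤ) (x : P₂ n), d₂ (n + 1) (d₂ n x) = 0 := by
    intro n x
    have hx : d₂ n x ∈ LinearMap.range (d₂ n).hom := ⟨x, rfl⟩
    rw [ex₂ n] at hx; exact hx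
  -- the inclusion of M' into P₁ 0
  set α : M' →ₗ[A] ↥(P₁ 0) := (LinearMap.ker (d₁ 0).hom).subtype.comp e₁.toLinearMap with hα_def
  have hα : ∀ m', d₁ 0 (α m') = 0 := fun m' => (e₁ m').2
  -- lift of the projection P₂ (-1) → M'' through g
  haveI := proj₂ (-1)
  have hmemker : ∀ w : ↥(P₂ (-1)), d₂ (-1) w ∈ LinearMap.ker (d₂ 0).hom :=
    fun w => LinearMap.mem_ker.mpr (dd₂ (-1) w)
  set μ : ↥(P₂ (-1)) →ₗ[A] ↥(LinearMap.ker (d₂ 0).hom) :=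
    LinearMap.codRestrict (LinearMap.ker (d₂ 0).hom) (d₂ (-1)).hom hmemker with hμ_def
  set π : ↥(P₂ (-1)) →ₗ[A] M'' := e₂.symm.toLinearMap.comp μ with hπ_def
  have hπ : ∀ w, π w = e₂.symm ⟨d₂ (-1) w, hmemker w⟩ := fun w => rfl
  have hπsurj : Function.Surjective π := by
    intro m''
    have hz : (e₂ m'' : ↥(P₂ 0)) ∈ LinearMap.range (d₂ (-1)).hom := by
      rw [ex₂ (-1)]; exact (e₂ m'').2
    obtain ⟨w, hw⟩ := hz
    refine ⟨w, ?_⟩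
    rw [hπ]
    have : (⟨d₂ (-1) w, hmemker w⟩ : ↥(LinearMap.ker (d₂ 0).hom)) = e₂ m'' := Subtype.ext hw
    rw [this, LinearEquiv.symm_apply_apply]
  obtain ⟨t, ht⟩ := Module.projective_lifting_property g π hg
  have ht' : ∀ w, g (t w) = π w := fun w => DFunLike.congr_fun ht w
  -- γ : a partial inverse construction on P₂ (-1)
  have hrg : ∀ u : ↥(P₂ (-2)), t ((d₂ (-2) u : ↥(P₂ (-1)))) ∈ LinearMap.range f := by
    intro u
    rw [hfg, LinearMap.mem_ker, ht', hπ]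
    have h2 : (⟨d₂ (-1) ((d₂ (-2) u : ↥(P₂ (-1)))), hmemker _⟩ :
        ↥(LinearMap.ker (d₂ 0).hom)) = 0 := Subtype.ext (dd₂ (-2) u)
    rw [h2, map_zero]
  set ρ : ↥(P₂ (-2)) →ₗ[A] ↥(LinearMap.range f) :=
    LinearMap.codRestrict (LinearMap.range f)
      (t.comp (d₂ (-2)).hom) hrg with hρ_def
  set γ₀ : ↥(P₂ (-2)) →ₗ[A] ↥(P₁ 0) :=
    α.comp ((LinearEquiv.ofInjective f hf).symm.toLinearMap.comp ρ) with hγ₀_def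
  have hγ₀ : ∀ (u : ↥(P₂ (-2))) (m' : M'),
      f m' = t ((d₂ (-2) u : ↥(P₂ (-1)))) → γ₀ u = α m' := by
    intro u m' hm'
    have h1 : ρ u = ⟨f m', LinearMap.mem_range_self f m'⟩ := Subtype.ext hm'.symm
    show α ((LinearEquiv.ofInjective f hf).symm (ρ u)) = α m'
    rw [h1]
    have h2 : (LinearEquiv.ofInjective f hf).symm ⟨f m', LinearMap.mem_range_self f m'⟩ = m' := by
      apply hf
      rw [LinearEquiv.ofInjective_symm_apply]
    rw [h2]
  have hγ₀z : ∀ u : ↥(P₂ (-3)), γ₀ ((d₂ (-3) u : ↥(P₂ (-2)))) = 0 := by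
    intro u
    have h0 : f 0 = t ((d₂ (-2) ((d₂ (-3) u : ↥(P₂ (-2)))) : ↥(P₂ (-1)))) := by
      have hz : (d₂ (-2) ((d₂ (-3) u : ↥(P₂ (-2)))) : ↥(P₂ (-1))) = 0 := dd₂ (-3) u
      rw [hz, map_zero, map_zero]
    rw [hγ₀ _ 0 h0, map_zero]
  have hγex : ∃ γ : ↥(P₂ (-1)) →ₗ[A] ↥(P₁ 0),
      ∀ u : ↥(P₂ (-2)), γ ((d₂ (-2) u : ↥(P₂ (-1)))) = γ₀ u := by
    have hres := pointwise_ext P₂ d₂ (P₁ 0) (ax₂ (P₁ 0) (fin₁ 0) (proj₁ 0)).2 (-3)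
      (show ↥(P₂ (-3 + 1)) →ₗ[A] ↥(P₁ 0) from γ₀) (fun u => hγ₀z u)
    obtain ⟨γ, hγ⟩ := hres
    exact ⟨γ, fun u => hγ u⟩
  obtain ⟨γ, hγ⟩ := hγex
  have hγ' : ∀ (m' : M') (w : ↥(P₂ (-1))), f m' = t w → d₂ (-1) w = 0 → γ w = α m' := by
    intro m' w hm' hw
    have hwr : w ∈ LinearMap.range ((d₂ (-2)).hom : ↥(P₂ (-2)) →ₗ[A] ↥(P₂ (-1))) := by
      rw [ex₂ (-2)]; exact LinearMap.mem_ker.mpr hw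
    obtain ⟨u, hu⟩ := hwr
    have hu' : ((d₂ (-2) u : ↥(P₂ (-1)))) = w := hu
    rw [← hu', hγ u]
    exact hγ₀ u m' (by rw [hu']; exact hm')
  -- the extension β : M →ₗ P₁ 0 of α along f
  set U : (M' × ↥(P₂ (-1))) →ₗ[A] M := f.coprod t with hU_def
  have hUsurj : Function.Surjective U := by
    intro m
    obtain ⟨w, hw⟩ := hπsurj (g m)
    have hmw : m - t w ∈ LinearMap.range f := by
      rw [hfg, LinearMap.mem_ker, map_sub, ht', hw, sub_self]
    obtain ⟨m', hm'⟩ := hmw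
    refine ⟨(m', w), ?_⟩
    show f m' + t w = m
    rw [hm']; abel
  set V : (M' × ↥(P₂ (-1))) →ₗ[A] ↥(P₁ 0) := α.coprod γ with hV_def
  have hUV : LinearMap.ker U ≤ LinearMap.ker V := by
    rintro ⟨m', w⟩ hk
    rw [LinearMap.mem_ker] at hk ⊢
    have hk' : f m' + t w = 0 := hk
    have hgf : g (f m') = 0 := by
      have hm : f m' ∈ LinearMap.ker g := by rw [← hfg]; exact ⟨m', rfl⟩
      exact hm
    have htw : t w = -f m' := eq_neg_of_add_eq_zero_right hk'
    have hπw : π w = 0 := by rw [← ht', htw, map_neg, hgf, neg_zero]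
    have hdw : d₂ (-1) w = 0 := by
      have h2 : (⟨d₂ (-1) w, hmemker w⟩ : ↥(LinearMap.ker (d₂ 0).hom)) = 0 := by
        have h3 := congrArg e₂ ((hπ w) ▸ hπw)
        rwa [LinearEquiv.apply_symm_apply, map_zero] at h3
      exact congrArg Subtype.val h2
    have hfm : f (-m') = t w := by rw [map_neg, htw]
    have hγw : γ w = α (-m') := hγ' (-m') w hfm hdw
    show α m' + γ w = 0
    rw [hγw, map_neg, add_neg_cancel]
  obtain ⟨β, hβU⟩ := factor_through U hUsurj V hUV
  have hβ : ∀ m', β (f m') = α m' := by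
    intro m'
    have h1 : U (m', 0) = f m' := by
      show f m' + t 0 = f m'
      rw [map_zero, add_zero]
    have h2 := hβU (m', 0)
    rw [h1] at h2
    rw [h2]
    show α m' + γ 0 = α m'
    rw [map_zero, add_zero]
  -- the map ψ : Z''0 → P₁ 1 with ψ ∘ qM = d₁ 0 ∘ β
  set qM : M →ₗ[A] ↥(LinearMap.ker (d₂ 0).hom) := e₂.toLinearMap.comp g with hqM_def
  have hqMsurj : Function.Surjective qM := by
    intro z
    obtain ⟨m, hm⟩ := hg (e₂.symm z)
    refine ⟨m, ?_⟩
    show e₂ (g m) = z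
    rw [hm, LinearEquiv.apply_symm_apply]
  have hqMker : LinearMap.ker qM ≤
      LinearMap.ker ((d₁ 0).hom.comp β) := by
    intro m hm
    rw [LinearMap.mem_ker] at hm ⊢
    have hgm : g m = 0 := by
      have hq : qM m = e₂ (g m) := rfl
      rw [hq] at hm
      have := congrArg e₂.symm hm
      rwa [map_zero, LinearEquiv.symm_apply_apply] at this
    have hmf : m ∈ LinearMap.range f := by rw [hfg]; exact hgm
    obtain ⟨m', hm'⟩ := hmf
    show d₁ 0 (β m) = 0
    rw [← hm', hβ m', hα m']
  obtain ⟨ψ, hψ⟩ := factor_through qM hqMsurj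
    ((d₁ 0).hom.comp β) hqMker
  have hψ' : ∀ m, ψ (qM m) = d₁ 0 (β m) := hψ
  have hqM : ∀ m, qM m = e₂ (g m) := fun _ => rfl
  have hψd : ∀ z, d₁ (0 + 1) (ψ z) = 0 := by
    intro z
    obtain ⟨m, rfl⟩ := hqMsurj z
    rw [hψ' m]
    exact dd₁ 0 (β m)
  -- Ψ : extension of ψ to P₂ 0
  have hΨex : ∃ Ψ : ↥(P₂ 0) →ₗ[A] ↥(P₁ (0 + 1)), ∀ x : ↥(P₂ (-1)), Ψ (d₂ (-1) x) = ψ (μ x) := by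
    refine pointwise_ext P₂ d₂ (P₁ (0 + 1)) (ax₂ (P₁ (0 + 1)) (fin₁ (0 + 1)) (proj₁ (0 + 1))).2 (-2)
      (ψ.comp μ : ↥(P₂ (-2 + 1)) →ₗ[A] ↥(P₁ (0 + 1))) ?_
    intro x
    show ψ (μ (show ↥(P₂ (-1)) from d₂ (-2) x)) = 0
    have hz : μ (show ↥(P₂ (-1)) from d₂ (-2) x) = 0 := Subtype.ext (dd₂ (-2) x)
    rw [hz, map_zero]
  obtain ⟨Ψ, hΨc⟩ := hΨex
  have hΨ : ∀ z : ↥(LinearMap.ker (d₂ 0).hom), Ψ ↑z = ψ z := by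
    intro z
    have hz : (z : ↥(P₂ 0)) ∈ LinearMap.range ((d₂ (-1)).hom : ↥(P₂ (-1)) →ₗ[A] ↥(P₂ 0)) := by
      rw [ex₂ (-1)]; exact z.2
    obtain ⟨w, hw⟩ := hz
    have hμw : μ w = z := Subtype.ext hw
    rw [← hw, hΨc w, hμw]
  -- η = h (-1)
  have hm1ex : ∃ η : ↥(P₂ (-1)) →ₗ[A] ↥(P₁ 0), ∀ w, d₁ 0 (η w) = ψ (μ w) := by
    have hres := pointwise_lift P₁ d₁ (P₂ (-1)) (ax₁ (P₂ (-1)) (fin₂ (-1)) (proj₂ (-1))).1 0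
      ((Ψ : ↥(P₂ (-1 + 1)) →ₗ[A] ↥(P₁ (0 + 1))).comp
        (d₂ (-1)).hom)
      (by intro w
          show d₁ (0 + 1) (Ψ (d₂ (-1) w)) = 0
          rw [hΨc w]; exact hψd (μ w))
    obtain ⟨η, hη⟩ := hres
    exact ⟨η, fun w => by rw [hη w]; exact hΨc w⟩
  obtain ⟨η, hη⟩ := hm1ex
  -- the twisting family h by two-sided recursion
  have stepF : ∀ (n : ℤ) (x : ↥(P₂ n) →ₗ[A] ↥(P₁ (n + 1))) (y : ↥(P₂ (n + 1)) →ₗ[A] ↥(P₁ (n + 1 + 1))),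
      (∀ w, d₁ (n + 1) (x w) + y (d₂ n w) = 0) →
      ∃ z : ↥(P₂ (n + 1 + 1)) →ₗ[A] ↥(P₁ (n + 1 + 1 + 1)),
        ∀ w, d₁ (n + 1 + 1) (y w) + z (d₂ (n + 1) w) = 0 := by
    intro n x y hxy
    have hres := pointwise_ext P₂ d₂ (P₁ (n + 1 + 1 + 1))
      (ax₂ (P₁ (n + 1 + 1 + 1)) (fin₁ (n + 1 + 1 + 1)) (proj₁ (n + 1 + 1 + 1))).2 n
      (-(d₁ (n + 1 + 1)).hom.comp y)
      (by intro w
          show -(d₁ (n + 1 + 1) (y (d₂ n w))) = 0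
          have hy : y (d₂ n w) = -(d₁ (n + 1) (x w)) :=
            eq_neg_of_add_eq_zero_right (hxy w)
          rw [hy, map_neg, dd₁ (n + 1) (x w), neg_zero, neg_zero])
    obtain ⟨z, hz⟩ := hres
    refine ⟨z, fun w => ?_⟩
    rw [hz w]
    show d₁ (n + 1 + 1) (y w) + -(d₁ (n + 1 + 1) (y w)) = 0
    rw [add_neg_cancel]
  have stepB : ∀ (n : ℤ) (y : ↥(P₂ (n + 1)) →ₗ[A] ↥(P₁ (n + 1 + 1)))
      (z : ↥(P₂ (n + 1 + 1)) →ₗ[A] ↥(P₁ (n + 1 + 1 + 1))),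
      (∀ w, d₁ (n + 1 + 1) (y w) + z (d₂ (n + 1) w) = 0) →
      ∃ x : ↥(P₂ n) →ₗ[A] ↥(P₁ (n + 1)), ∀ w, d₁ (n + 1) (x w) + y (d₂ n w) = 0 := by
    intro n y z hyz
    have hres := pointwise_lift P₁ d₁ (P₂ n) (ax₁ (P₂ n) (fin₂ n) (proj₂ n)).1 (n + 1)
      (-(y.comp (d₂ n).hom))
      (by intro w
          show d₁ (n + 1 + 1) (-(y (d₂ n w))) = 0
          have hzz : z (d₂ (n + 1) (d₂ n w)) = 0 := by rw [dd₂ n w, map_zero]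
          have := hyz (d₂ n w)
          rw [hzz, add_zero] at this
          rw [map_neg, this, neg_zero])
    obtain ⟨x, hx⟩ := hres
    refine ⟨x, fun w => ?_⟩
    rw [hx w]
    show -(y (d₂ n w)) + y (d₂ n w) = 0
    rw [neg_add_cancel]
  obtain ⟨h, hC, h0eq⟩ := int_rec_compat
    (T := fun n : ℤ => ↥(P₂ n) →ₗ[A] ↥(P₁ (n + 1)))
    (fun n x y => ∀ w, d₁ (n + 1) (x w) + y (d₂ n w) = 0)
    (show ↥(P₂ (-1)) →ₗ[A] ↥(P₁ (-1 + 1)) by exact η) (-Ψ)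
    (by intro w
        show d₁ 0 (η w) + -(Ψ (d₂ (-1) w)) = 0
        rw [hη w, hΨc w, add_neg_cancel])
    stepF stepB
  have h0app : ∀ y, h 0 y = -(Ψ y) := fun y => by rw [h0eq]; rfl
  -- the direct sum complex with twisted differential
  set DD : ∀ n : ℤ, (↥(P₁ n) × ↥(P₂ n)) →ₗ[A] (↥(P₁ (n + 1)) × ↥(P₂ (n + 1))) := fun n =>
    (((d₁ n).hom.comp (LinearMap.fst A ↥(P₁ n) ↥(P₂ n)) +
      (h n).comp (LinearMap.snd A ↥(P₁ n) ↥(P₂ n))).prod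
      ((d₂ n).hom.comp (LinearMap.snd A ↥(P₁ n) ↥(P₂ n))))
    with hDD_def
  have hDD : ∀ (n : ℤ) (x : ↥(P₁ n)) (y : ↥(P₂ n)),
      DD n (x, y) = (d₁ n x + h n y, d₂ n y) := fun n x y => rfl
  refine ⟨fun n => ModuleCat.of A (↥(P₁ n) × ↥(P₂ n)), fun n => ModuleCat.ofHom (DD n), ?_, ?_, ?_, ?_, ?_⟩
  · intro n
    haveI := fin₁ n; haveI := fin₂ n
    show Module.Finite A (↥(P₁ n) × ↥(P₂ n))
    infer_instance
  · intro n
    haveI := proj₁ n; haveI := proj₂ n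
    show Module.Projective A (↥(P₁ n) × ↥(P₂ n))
    infer_instance
  · -- exactness
    intro n
    apply le_antisymm
    · intro v hv
      obtain ⟨w, rfl⟩ := hv
      obtain ⟨x, y⟩ := w
      show DD (n + 1) (DD n (x, y)) = 0
      have e1 : DD (n + 1) (DD n (x, y))
          = (d₁ (n + 1) (d₁ n x + h n y) + h (n + 1) (d₂ n y), d₂ (n + 1) (d₂ n y)) := rfl
      rw [e1]
      have c1 : d₁ (n + 1) (d₁ n x + h n y) + h (n + 1) (d₂ n y) = 0 := by
        rw [map_add, dd₁ n x, zero_add]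
        exact hC n y
      rw [c1, dd₂ n y]
      rfl
    · intro v hv
      obtain ⟨x, y⟩ := v
      rw [LinearMap.mem_ker] at hv
      have hv1 : d₁ (n + 1) x + h (n + 1) y = 0 := congrArg Prod.fst hv
      have hv2 : d₂ (n + 1) y = 0 := congrArg Prod.snd hv
      have hy : y ∈ LinearMap.range (d₂ n).hom := by
        rw [ex₂ n]; exact LinearMap.mem_ker.mpr hv2
      obtain ⟨y₂, hy₂⟩ := hy
      have hx0 : d₁ (n + 1) (x - h n y₂) = 0 := by
        rw [map_sub]
        have hcn := hC n y₂
        rw [hy₂] at hcn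
        have e2 : d₁ (n + 1) (h n y₂) = -(h (n + 1) y) := eq_neg_of_add_eq_zero_left hcn
        have e3 : d₁ (n + 1) x = -(h (n + 1) y) := eq_neg_of_add_eq_zero_left hv1
        rw [e2, e3, sub_self]
      have hx : x - h n y₂ ∈ LinearMap.range (d₁ n).hom := by
        rw [ex₁ n]; exact LinearMap.mem_ker.mpr hx0
      obtain ⟨x₁, hx₁⟩ := hx
      refine ⟨(x₁, y₂), ?_⟩
      show (d₁ n x₁ + h n y₂, d₂ n y₂) = (x, y)
      rw [hx₁, hy₂]
      have : x - h n y₂ + h n y₂ = x := by abel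
      rw [this]
  · -- total acyclicity
    intro Q hQf hQp
    constructor
    · intro n F hF
      obtain ⟨Fl, rfl⟩ : ∃ Fl : ↥Q →ₗ[A] (↥(P₁ (n + 1)) × ↥(P₂ (n + 1))),
          (ModuleCat.ofHom Fl : Q ⟶ ModuleCat.of A (↥(P₁ (n + 1)) × ↥(P₂ (n + 1)))) = F := ⟨F.hom, rfl⟩
      have hFp : ∀ q, DD (n + 1) (Fl q) = 0 := fun q => LinearMap.congr_fun (congrArg ModuleCat.Hom.hom hF) q
      obtain ⟨g₂, hg₂⟩ := pointwise_lift P₂ d₂ Q (ax₂ Q hQf hQp).1 n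
        ((LinearMap.snd A ↥(P₁ (n + 1)) ↥(P₂ (n + 1))).comp Fl)
        (fun q => congrArg Prod.snd (hFp q))
      have hq1' : ∀ q, d₁ (n + 1)
          (((LinearMap.fst A ↥(P₁ (n + 1)) ↥(P₂ (n + 1))).comp Fl - (h n).comp g₂) q) = 0 := by
        intro q
        show d₁ (n + 1) ((Fl q).1 - h n (g₂ q)) = 0
        rw [map_sub]
        have e1 : d₁ (n + 1) (Fl q).1 = -(h (n + 1) (Fl q).2) :=
          eq_neg_of_add_eq_zero_left (congrArg Prod.fst (hFp q))
        have e2 : d₁ (n + 1) (h n (g₂ q)) = -(h (n + 1) (d₂ n (g₂ q))) :=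
          eq_neg_of_add_eq_zero_left (hC n (g₂ q))
        have e3 : d₂ n (g₂ q) = (Fl q).2 := hg₂ q
        rw [e1, e2, e3, sub_self]
      obtain ⟨g₁, hg₁⟩ := pointwise_lift P₁ d₁ Q (ax₁ Q hQf hQp).1 n
        ((LinearMap.fst A ↥(P₁ (n + 1)) ↥(P₂ (n + 1))).comp Fl - (h n).comp g₂) hq1'
      refine ⟨ModuleCat.ofHom (g₁.prod g₂ : ↥Q →ₗ[A] (↥(P₁ n) × ↥(P₂ n))), ?_⟩
      apply ModuleCat.hom_ext
      apply LinearMap.ext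
      intro q
      show DD n (g₁ q, g₂ q) = Fl q
      rw [hDD n (g₁ q) (g₂ q)]
      have c1 : d₁ n (g₁ q) + h n (g₂ q) = (Fl q).1 := by
        rw [hg₁ q]
        show (Fl q).1 - h n (g₂ q) + h n (g₂ q) = (Fl q).1
        abel
      have c2 : d₂ n (g₂ q) = (Fl q).2 := hg₂ q
      rw [c1, c2]
    · intro n F hF
      obtain ⟨Fl, rfl⟩ : ∃ Fl : (↥(P₁ (n + 1)) × ↥(P₂ (n + 1))) →ₗ[A] ↥Q,
          (ModuleCat.ofHom Fl : ModuleCat.of A (↥(P₁ (n + 1)) × ↥(P₂ (n + 1))) ⟶ Q) = F := ⟨F.hom, rfl⟩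
      have hFp : ∀ v, Fl (DD n v) = 0 := fun v => LinearMap.congr_fun (congrArg ModuleCat.Hom.hom hF) v
      set f₁ : ↥(P₁ (n + 1)) →ₗ[A] ↥Q :=
        Fl.comp (LinearMap.inl A ↥(P₁ (n + 1)) ↥(P₂ (n + 1))) with hf₁_def
      set f₂ : ↥(P₂ (n + 1)) →ₗ[A] ↥Q :=
        Fl.comp (LinearMap.inr A ↥(P₁ (n + 1)) ↥(P₂ (n + 1))) with hf₂_def
      have hsplit : ∀ x y, Fl (x, y) = f₁ x + f₂ y := by
        intro x y
        have e1 : ((x, 0) : ↥(P₁ (n + 1)) × ↥(P₂ (n + 1))) + (0, y) = (x, y) := by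
          rw [Prod.mk_add_mk, add_zero, zero_add]
        show Fl (x, y) = Fl (x, 0) + Fl (0, y)
        rw [← map_add, e1]
      have cond1 : ∀ x : ↥(P₁ n), f₁ (d₁ n x) = 0 := by
        intro x
        have e1 : DD n (x, 0) = (d₁ n x, 0) := by
          rw [hDD n x 0, map_zero, map_zero, add_zero]
        have := hFp (x, 0)
        rw [e1] at this
        exact this
      have cond2 : ∀ y : ↥(P₂ n), f₁ (h n y) + f₂ (d₂ n y) = 0 := by
        intro y
        have e1 : DD n (0, y) = (h n y, d₂ n y) := by
          rw [hDD n 0 y, map_zero, zero_add]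
        have h2 := hFp (0, y)
        rw [e1, hsplit (h n y) (d₂ n y)] at h2
        exact h2
      obtain ⟨g₁, hg₁⟩ := pointwise_ext P₁ d₁ Q (ax₁ Q hQf hQp).2 n f₁ cond1
      have cond2' : ∀ y : ↥(P₂ n), (f₂ - g₁.comp (h (n + 1))) (d₂ n y) = 0 := by
        intro y
        show f₂ (d₂ n y) - g₁ (h (n + 1) (d₂ n y)) = 0
        have e1 : h (n + 1) (d₂ n y) = -(d₁ (n + 1) (h n y)) :=
          eq_neg_of_add_eq_zero_right (hC n y)
        rw [e1, map_neg, hg₁ (h n y), sub_neg_eq_add, add_comm]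
        exact cond2 y
      obtain ⟨g₂, hg₂⟩ := pointwise_ext P₂ d₂ Q (ax₂ Q hQf hQp).2 n
        (f₂ - g₁.comp (h (n + 1))) cond2'
      refine ⟨ModuleCat.ofHom (g₁.comp (LinearMap.fst A ↥(P₁ (n + 1 + 1)) ↥(P₂ (n + 1 + 1))) +
        g₂.comp (LinearMap.snd A ↥(P₁ (n + 1 + 1)) ↥(P₂ (n + 1 + 1))) :
        (↥(P₁ (n + 1 + 1)) × ↥(P₂ (n + 1 + 1))) →ₗ[A] ↥Q), ?_⟩
      apply ModuleCat.hom_ext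
      apply LinearMap.ext
      rintro ⟨x, y⟩
      show g₁ ((DD (n + 1) (x, y)).1) + g₂ ((DD (n + 1) (x, y)).2) = Fl (x, y)
      rw [hDD (n + 1) x y]
      show g₁ (d₁ (n + 1) x + h (n + 1) y) + g₂ (d₂ (n + 1) y) = Fl (x, y)
      rw [map_add, hg₁ x, hg₂ y, hsplit x y]
      show f₁ x + g₁ (h (n + 1) y) + (f₂ y - g₁ (h (n + 1) y)) = f₁ x + f₂ y
      abel
  · -- the cocycle at 0 is M
    set Θ : M →ₗ[A] (↥(P₁ 0) × ↥(P₂ 0)) :=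
      β.prod ((LinearMap.ker (d₂ 0).hom).subtype.comp qM) with hΘ_def
    have hΘ : ∀ m, Θ m = (β m, ↑(qM m)) := fun m => rfl
    have hmem : ∀ (x : ↥(P₁ 0)) (y : ↥(P₂ 0)),
        (x, y) ∈ LinearMap.ker (DD 0) ↔ (d₁ 0 x + h 0 y = 0 ∧ d₂ 0 y = 0) := by
      intro x y
      constructor
      · intro hxy
        have hxy' : DD 0 (x, y) = 0 := hxy
        exact ⟨congrArg Prod.fst hxy', congrArg Prod.snd hxy'⟩
      · rintro ⟨h1, h2⟩
        show DD 0 (x, y) = 0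
        rw [hDD 0 x y, h1, h2]
        rfl
    have hgf0 : ∀ m' : M', g (f m') = 0 := by
      intro m'
      have hm : f m' ∈ LinearMap.ker g := by rw [← hfg]; exact ⟨m', rfl⟩
      exact hm
    have hΘinj : Function.Injective Θ := by
      have hker : ∀ m, Θ m = 0 → m = 0 := by
        intro m hm
        have hb : β m = 0 := congrArg Prod.fst hm
        have hq : (qM m : ↥(P₂ 0)) = 0 := congrArg Prod.snd hm
        have hq0 : qM m = 0 := Subtype.ext hq
        have hgm : g m = 0 := by
          rw [hqM m] at hq0
          have h3 := congrArg e₂.symm hq0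
          rwa [LinearEquiv.symm_apply_apply, map_zero] at h3
        have hmf : m ∈ LinearMap.range f := by rw [hfg]; exact LinearMap.mem_ker.mpr hgm
        obtain ⟨m', hm'⟩ := hmf
        have hαz : α m' = 0 := by rw [← hβ m', hm', hb]
        have he : e₁ m' = 0 := Subtype.ext hαz
        have hm'0 : m' = 0 := by
          have h4 := congrArg e₁.symm he
          rwa [LinearEquiv.symm_apply_apply, map_zero] at h4
        rw [← hm', hm'0, map_zero]
      intro a b hab
      have : a - b = 0 := hker _ (by rw [map_sub, hab, sub_self])
      exact sub_eq_zero.mp this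
    have hrange : LinearMap.range Θ = LinearMap.ker (DD 0) := by
      apply le_antisymm
      · intro v hv
        obtain ⟨m, rfl⟩ := hv
        rw [hΘ m, hmem (β m) ((qM m : ↥(P₂ 0)))]
        constructor
        · rw [h0app ((qM m : ↥(P₂ 0)))]
          have e1 : Ψ ((qM m : ↥(P₂ 0))) = ψ (qM m) := hΨ (qM m)
          rw [e1, hψ' m, add_neg_cancel]
        · exact (qM m).2
      · intro v hv
        obtain ⟨x, y⟩ := v
        rw [hmem x y] at hv
        obtain ⟨hv1, hv2⟩ := hv
        have hymem : y ∈ LinearMap.ker (d₂ 0).hom := LinearMap.mem_ker.mpr hv2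
        obtain ⟨m, hm⟩ := hg (e₂.symm ⟨y, hymem⟩)
        have hqm : qM m = ⟨y, hymem⟩ := by
          rw [hqM m, hm, LinearEquiv.apply_symm_apply]
        have h2 : ψ (⟨y, hymem⟩ : ↥(LinearMap.ker (d₂ 0).hom)) = Ψ y := (hΨ ⟨y, hymem⟩).symm
        have hd : d₁ 0 (β m) = d₁ 0 x := by
          rw [← hψ' m, hqm, h2]
          have e3 : d₁ 0 x = -(h 0 y) := eq_neg_of_add_eq_zero_left hv1
          rw [e3, h0app y, neg_neg]
        have hxm : x - β m ∈ LinearMap.ker (d₁ 0).hom :=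
          LinearMap.mem_ker.mpr (by rw [map_sub, hd, sub_self])
        have hαm' : α (e₁.symm ⟨x - β m, hxm⟩) = x - β m := by
          show ↑(e₁ (e₁.symm ⟨x - β m, hxm⟩)) = x - β m
          rw [LinearEquiv.apply_symm_apply]
        refine ⟨m + f (e₁.symm ⟨x - β m, hxm⟩), ?_⟩
        show (β (m + f (e₁.symm ⟨x - β m, hxm⟩)),
          (qM (m + f (e₁.symm ⟨x - β m, hxm⟩)) : ↥(P₂ 0))) = (x, y)
        have c1 : β (m + f (e₁.symm ⟨x - β m, hxm⟩)) = x := by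
          rw [map_add, hβ _, hαm']
          abel
        have c2 : (qM (m + f (e₁.symm ⟨x - β m, hxm⟩)) : ↥(P₂ 0)) = y := by
          have e4 : qM (m + f (e₁.symm ⟨x - β m, hxm⟩)) = qM m := by
            rw [map_add]
            have hz : qM (f (e₁.symm ⟨x - β m, hxm⟩)) = 0 := by
              rw [hqM, hgf0, map_zero]
            rw [hz, add_zero]
          rw [e4, hqm]
        rw [c1, c2]
    exact ⟨(LinearEquiv.ofInjective Θ hΘinj).trans (LinearEquiv.ofEq _ _ hrange)⟩
end

section
/- Let A be an artin algebra. The class of finitely generated Gorenstein-projective left A-modules is closed under kernels of epimorphisms: if 0 → M' → M → M'' → 0 is a short exact sequence of finitely generated A-modules with M and M'' Gorenstein-projective, then M' is Gorenstein-projective. -/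
open CategoryTheory DirectSum

universe u

set_option linter.unusedSectionVars false
set_option maxHeartbeats 1000000

structure GPData (A : Type u) [Ring A] where
  P : ℤ → ModuleCat.{u} A
  d : ∀ n : ℤ, P n →ₗ[A] P (n+1)
  fin : ∀ n : ℤ, Module.Finite A (P n)
  proj : ∀ n : ℤ, Module.Projective A (P n)
  exact : ∀ n : ℤ, LinearMap.range (d n) = LinearMap.ker (d (n+1))
  lift2 : ∀ (Q : ModuleCat.{u} A), Module.Finite A Q → Module.Projective A Q →
      ∀ (n : ℤ) (f : P (n+1) →ₗ[A] Q), f ∘ₗ d n = 0 →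
        ∃ g : P (n+1+1) →ₗ[A] Q, g ∘ₗ d (n+1) = f

namespace GPData

variable {A : Type u} [Ring A] (T : GPData A)

lemma dd_apply (n : ℤ) (x : T.P n) : T.d (n+1) (T.d n x) = 0 := by
  have h : T.d n x ∈ LinearMap.range (T.d n) := ⟨x, rfl⟩
  rw [T.exact n] at h
  exact h

lemma d_comp_d (n : ℤ) : (T.d (n+1)).comp (T.d n) = 0 := by
  ext x
  exact T.dd_apply n x

lemma lift1 (Q : ModuleCat.{u} A) (hQ : Module.Projective A Q) (n : ℤ)
    (f : Q ⟶ T.P (n+1))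
    (hf : f ≫ ModuleCat.ofHom (X := T.P (n+1)) (Y := T.P (n+1+1)) (T.d (n+1)) = 0) :
    ∃ g : Q ⟶ T.P n, g ≫ ModuleCat.ofHom (X := T.P n) (Y := T.P (n+1)) (T.d n) = f := by
  have hmem : ∀ x : Q, f.hom x ∈ LinearMap.range (T.d n) := by
    intro x
    rw [T.exact n]
    have := congrArg (fun h => h.hom x) hf
    simpa using this
  obtain ⟨g, hg⟩ := Module.projective_lifting_property (R := A)
    ((T.d n).rangeRestrict)
    (LinearMap.codRestrict (LinearMap.range (T.d n)) f.hom hmem)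
    (LinearMap.surjective_rangeRestrict _)
  refine ⟨ModuleCat.ofHom g, ?_⟩
  ext x
  have := congrArg (fun h => ((h x : LinearMap.range (T.d n)) : T.P (n+1))) hg
  simpa using this

/-- lift a map landing in cocycles through the previous differential -/
lemma lift_through (n : ℤ) {V : Type u} [AddCommGroup V] [Module A V]
    [Module.Projective A V] (f : V →ₗ[A] T.P (n+1)) (hf : ∀ v, T.d (n+1) (f v) = 0) :
    ∃ ψ : V →ₗ[A] T.P n, ∀ v, T.d n (ψ v) = f v := by
  have hmem : ∀ v, f v ∈ LinearMap.range (T.d n) := by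
    intro v; rw [T.exact n]; exact hf v
  obtain ⟨ψ, hψ⟩ := Module.projective_lifting_property (T.d n).rangeRestrict
    (LinearMap.codRestrict _ f hmem) (LinearMap.surjective_rangeRestrict _)
  exact ⟨ψ, fun v => congrArg Subtype.val (congrArg (fun h => h v) hψ)⟩

/-- lift2 in pointwise form -/
lemma lift2' (n : ℤ) {V : Type u} [AddCommGroup V] [Module A V]
    [Module.Finite A V] [Module.Projective A V]
    (f : T.P (n+1) →ₗ[A] V) (hf : ∀ x, f (T.d n x) = 0) :
    ∃ g : T.P (n+1+1) →ₗ[A] V, ∀ x, g (T.d (n+1) x) = f x := by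
  obtain ⟨g, hg⟩ := T.lift2 (ModuleCat.of A V) ‹_› ‹_› n f
    (by ext x; exact hf x)
  exact ⟨g, fun x => congrArg (fun h => h x) hg⟩

lemma toIsFgGP (M : Type u) [AddCommGroup M] [Module A M]
    (h : Nonempty (M ≃ₗ[A] LinearMap.ker (T.d 0))) : IsFgGorensteinProjective A M :=
  ⟨T.P, fun n => ModuleCat.ofHom (X := T.P n) (Y := T.P (n+1)) (T.d n), T.fin, T.proj, T.exact,
    fun Q hfQ hpQ => ⟨fun n f hf => T.lift1 Q hpQ n f hf, fun n f hf => by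
      obtain ⟨g, hg⟩ := T.lift2 Q hfQ hpQ n f.hom (by simpa using congrArg ModuleCat.Hom.hom hf)
      exact ⟨ModuleCat.ofHom g, ModuleCat.hom_ext hg⟩⟩, h⟩

lemma ofIsFgGP (M : Type u) [AddCommGroup M] [Module A M]
    (h : IsFgGorensteinProjective A M) :
    ∃ T : GPData A, Nonempty (M ≃ₗ[A] LinearMap.ker (T.d 0)) := by
  obtain ⟨P, d, h1, h2, h3, h4, h5⟩ := h
  exact ⟨⟨P, fun n => (d n).hom, h1, h2, h3, fun Q hfQ hpQ n f hf => by
    obtain ⟨g, hg⟩ := (h4 Q hfQ hpQ).2 n (ModuleCat.ofHom f) (by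
      ext x; simpa using congrArg (fun h => h x) hf)
    exact ⟨g.hom, by simpa using congrArg ModuleCat.Hom.hom hg⟩⟩, h5⟩

/-- cast equivalence -/
def pcast {m n : ℤ} (h : m = n) : T.P m ≃ₗ[A] T.P n := h ▸ LinearEquiv.refl A (T.P m)

@[simp] lemma pcast_rfl {m : ℤ} (x : T.P m) : T.pcast (rfl : m = m) x = x := rfl

lemma pcast_pcast {a b c : ℤ} (h1 : a = b) (h2 : b = c) (x : T.P a) :
    T.pcast h2 (T.pcast h1 x) = T.pcast (h1.trans h2) x := by subst h1; subst h2; rfl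

lemma d_pcast {a b : ℤ} (h : a = b) (h' : a + 1 = b + 1) (x : T.P a) :
    T.d b (T.pcast h x) = T.pcast h' (T.d a x) := by subst h; rfl

lemma map_pcast_ker {a b : ℤ} (h : a = b) (h' : a + 1 = b + 1) :
    Submodule.map (T.pcast h).toLinearMap (LinearMap.ker (T.d a)) = LinearMap.ker (T.d b) := by
  subst h
  have : T.pcast (rfl : a = a) = LinearEquiv.refl A (T.P a) := rfl
  rw [this]
  simp

/-- shift of a complex -/
def shift (k : ℤ) : GPData A where
  P n := T.P (n + k)
  d n := ((T.pcast (show n + k + 1 = n + 1 + k by ring)).toLinearMap.comp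
      (T.d (n + k) : T.P (n+k) →ₗ[A] T.P (n+k+1)) : T.P (n+k) →ₗ[A] T.P (n+1+k))
  fin n := T.fin (n + k)
  proj n := T.proj (n + k)
  exact n := by
    rw [LinearMap.range_comp, LinearMap.ker_comp, T.exact (n+k)]
    rw [T.map_pcast_ker (show n + k + 1 = n + 1 + k by ring) (by ring)]
    have : LinearMap.ker (T.pcast (show n+1+k+1 = n+1+1+k by ring)).toLinearMap = ⊥ :=
      LinearEquiv.ker _
    rw [this]
    rfl
  lift2 Q hfQ hpQ n f hf := by
    have hf' : (f : T.P (n+1+k) →ₗ[A] Q).comp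
        ((T.pcast (show n + k + 1 = n + 1 + k by ring)).toLinearMap.comp
          (T.d (n + k) : T.P (n+k) →ₗ[A] T.P (n+k+1))) = 0 := hf
    obtain ⟨g, hg⟩ := T.lift2 Q hfQ hpQ (n+k)
      ((f : T.P (n+1+k) →ₗ[A] Q).comp (T.pcast (show n + k + 1 = n + 1 + k by ring)).toLinearMap)
      (by
        ext x
        have := congrArg (fun h => h x) hf'
        simpa using this)
    refine ⟨(g : T.P (n+k+1+1) →ₗ[A] Q).comp
      (T.pcast (show n + 1 + 1 + k = n + k + 1 + 1 by ring)).toLinearMap, ?_⟩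
    have e1 : n + 1 + k = n + k + 1 := by ring
    have e2 : n + 1 + k + 1 = n + k + 1 + 1 := by ring
    have e3 : n + k + 1 = n + 1 + k := by ring
    have e4 : n + 1 + 1 + k = n + k + 1 + 1 := by ring
    refine LinearMap.ext fun (x : T.P (n+1+k)) => ?_
    show g (T.pcast e4 (T.pcast (show n+1+k+1 = n+1+1+k by ring) (T.d (n+1+k) x))) = f x
    rw [T.pcast_pcast, ← T.d_pcast e1 (Eq.trans (show n+1+k+1 = n+1+1+k by ring) e4) x]
    have hgx : g (T.d (n+k+1) (T.pcast e1 x)) = f (T.pcast e3 (T.pcast e1 x)) :=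
      congrArg (fun h => h (T.pcast e1 x)) hg
    rw [hgx, T.pcast_pcast]
    rfl

/-- kernel cast -/
def kcast {a b : ℤ} (h : a = b) :
    (LinearMap.ker (T.d a) : Type u) ≃ₗ[A] LinearMap.ker (T.d b) := h ▸ LinearEquiv.refl A _

lemma shift_ker (k : ℤ) :
    Nonempty ((LinearMap.ker ((T.shift k).d 0) : Type u) ≃ₗ[A] LinearMap.ker (T.d k)) := by
  constructor
  have h1 : LinearMap.ker ((T.shift k).d 0 : T.P (0 + k) →ₗ[A] T.P (0 + 1 + k))
      = LinearMap.ker (T.d (0 + k)) := by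
    show LinearMap.ker ((T.pcast (show 0 + k + 1 = 0 + 1 + k by ring)).toLinearMap.comp
      (T.d (0 + k))) = _
    rw [LinearMap.ker_comp, LinearEquiv.ker]
    rfl
  exact (LinearEquiv.ofEq (LinearMap.ker ((T.shift k).d 0 : T.P (0 + k) →ₗ[A] T.P (0 + 1 + k))) (LinearMap.ker (T.d (0 + k))) h1).trans (T.kcast (show (0:ℤ) + k = k by ring))

end GPData

section Strip
variable {A : Type u} [Ring A] (T : GPData A) (c : ℤ)
  (W Q' : Type u) [AddCommGroup W] [Module A W]
  [AddCommGroup Q'] [Module A Q'] [Module.Finite A Q'] [Module.Projective A Q']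
  (ε : (W × Q') ≃ₗ[A] LinearMap.ker (T.d (c+1+1)))

namespace StripAux

/-- lift2 in pointwise form (copy used in strip) -/
lemma lift2'' (S : GPData A) (n : ℤ) {V : Type u} [AddCommGroup V] [Module A V]
    [Module.Finite A V] [Module.Projective A V]
    (f : S.P (n+1) →ₗ[A] V) (hf : ∀ x, f (S.d n x) = 0) :
    ∃ g : S.P (n+1+1) →ₗ[A] V, ∀ x, g (S.d (n+1) x) = f x := by
  obtain ⟨g, hg⟩ := S.lift2 (ModuleCat.of A V) ‹_› ‹_› n f (by ext x; exact hf x)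
  exact ⟨g, fun x => congrArg (fun h => h x) hg⟩

lemma lift_through' (S : GPData A) (n : ℤ) {V : Type u} [AddCommGroup V] [Module A V]
    [Module.Projective A V] (f : V →ₗ[A] S.P (n+1)) (hf : ∀ v, S.d (n+1) (f v) = 0) :
    ∃ ψ : V →ₗ[A] S.P n, ∀ v, S.d n (ψ v) = f v := by
  have hmem : ∀ v, f v ∈ LinearMap.range (S.d n) := by
    intro v; rw [S.exact n]; exact hf v
  obtain ⟨ψ, hψ⟩ := Module.projective_lifting_property (S.d n).rangeRestrict
    (LinearMap.codRestrict _ f hmem) (LinearMap.surjective_rangeRestrict _)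
  exact ⟨ψ, fun v => congrArg Subtype.val (congrArg (fun h => h v) hψ)⟩

noncomputable def jj : Q' →ₗ[A] T.P (c+1+1) :=
  (LinearMap.ker (T.d (c+1+1))).subtype ∘ₗ (ε : (W × Q') →ₗ[A] LinearMap.ker (T.d (c+1+1)))
    ∘ₗ LinearMap.inr A W Q'

lemma jj_apply (q : Q') : jj T c W Q' ε q = ((ε (0, q) : LinearMap.ker (T.d (c+1+1))) : T.P (c+1+1)) := rfl

lemma d_jj (q : Q') : T.d (c+1+1) (jj T c W Q' ε q) = 0 := (ε (0, q)).2

noncomputable def pii : ↥(LinearMap.ker (T.d (c+1+1))) →ₗ[A] Q' :=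
  LinearMap.snd A W Q' ∘ₗ (ε.symm : ↥(LinearMap.ker (T.d (c+1+1))) →ₗ[A] (W × Q'))

lemma pii_eps (w : W) (q : Q') : pii T c W Q' ε (ε (w, q)) = q := by
  show (ε.symm (ε (w, q))).2 = q
  rw [ε.symm_apply_apply]

noncomputable def f0 : T.P (c+1) →ₗ[A] Q' :=
  pii T c W Q' ε ∘ₗ
    LinearMap.codRestrict (LinearMap.ker (T.d (c+1+1)))
      (T.d (c+1) : T.P (c+1) →ₗ[A] T.P (c+1+1)) (fun u => T.dd_apply (c+1) u)

lemma f0_apply (u : T.P (c+1)) :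
    f0 T c W Q' ε u = pii T c W Q' ε ⟨T.d (c+1) u, T.dd_apply (c+1) u⟩ := rfl

lemma d_f0 (x : T.P c) : f0 T c W Q' ε (T.d c x) = 0 := by
  rw [f0_apply]
  have h1 : T.d (c+1) (T.d c x) = 0 := T.dd_apply c x
  have h0 : (⟨T.d (c+1) (T.d c x), T.dd_apply (c+1) (T.d c x)⟩ :
      ↥(LinearMap.ker (T.d (c+1+1)))) = 0 := Subtype.ext h1
  rw [h0, map_zero]

noncomputable def specr :=
  lift2'' T c (V := Q') (f0 T c W Q' ε) (fun x => d_f0 T c W Q' ε x)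

noncomputable def rr : T.P (c+1+1) →ₗ[A] Q' := (specr T c W Q' ε).choose

lemma rr_d (u : T.P (c+1)) : rr T c W Q' ε (T.d (c+1) u) = f0 T c W Q' ε u :=
  (specr T c W Q' ε).choose_spec u

lemma rr_jj (q : Q') : rr T c W Q' ε (jj T c W Q' ε q) = q := by
  have hmem : jj T c W Q' ε q ∈ LinearMap.range (T.d (c+1)) := by
    rw [T.exact (c+1)]; exact d_jj T c W Q' ε q
  obtain ⟨u, hu⟩ := hmem
  rw [← hu, rr_d, f0_apply]
  have h0 : (⟨T.d (c+1) u, T.dd_apply (c+1) u⟩ : ↥(LinearMap.ker (T.d (c+1+1))))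
      = ε (0, q) := Subtype.ext (hu.trans (jj_apply T c W Q' ε q))
  rw [h0, pii_eps]

noncomputable def speck :=
  lift_through' T (c+1) (V := Q') (jj T c W Q' ε) (fun q => d_jj T c W Q' ε q)

noncomputable def kk : Q' →ₗ[A] T.P (c+1) := (speck T c W Q' ε).choose

lemma d_kk (q : Q') : T.d (c+1) (kk T c W Q' ε q) = jj T c W Q' ε q :=
  (speck T c W Q' ε).choose_spec q

noncomputable def rho : T.P (c+1) →ₗ[A] Q' :=
  rr T c W Q' ε ∘ₗ (T.d (c+1) : T.P (c+1) →ₗ[A] T.P (c+1+1))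

lemma rho_kk (q : Q') : rho T c W Q' ε (kk T c W Q' ε q) = q := by
  show rr T c W Q' ε (T.d (c+1) (kk T c W Q' ε q)) = q
  rw [d_kk, rr_jj]

lemma rho_d (x : T.P c) : rho T c W Q' ε (T.d c x) = 0 := by
  show rr T c W Q' ε (T.d (c+1) (T.d c x)) = 0
  have h1 : T.d (c+1) (T.d c x) = 0 := T.dd_apply c x
  rw [h1, map_zero]

noncomputable def S : ∀ n : ℤ, Submodule A (T.P n) := fun n =>
  if h1 : n = c+1 then
    Submodule.comap (T.pcast h1).toLinearMap (LinearMap.range (kk T c W Q' ε))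
  else if h2 : n = c+1+1 then
    Submodule.comap (T.pcast h2).toLinearMap (LinearMap.range (jj T c W Q' ε))
  else ⊥

lemma S_eq1 : S T c W Q' ε (c+1) = LinearMap.range (kk T c W Q' ε) := by
  show dite _ _ _ = _
  rw [dif_pos rfl]
  rfl

lemma S_eq2 : S T c W Q' ε (c+1+1) = LinearMap.range (jj T c W Q' ε) := by
  show dite _ _ _ = _
  rw [dif_neg (by omega), dif_pos rfl]
  rfl

lemma S_other {n : ℤ} (h1 : n ≠ c+1) (h2 : n ≠ c+1+1) : S T c W Q' ε n = ⊥ := by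
  show dite _ _ _ = _
  rw [dif_neg h1, dif_neg h2]

lemma hdS : ∀ n : ℤ, ∀ x ∈ S T c W Q' ε n, T.d n x ∈ S T c W Q' ε (n+1) := by
  intro n x hx
  by_cases h1 : n = c+1
  · subst h1
    rw [S_eq1] at hx
    obtain ⟨q, rfl⟩ := hx
    rw [S_eq2, d_kk]
    exact ⟨q, rfl⟩
  · by_cases h2 : n = c+1+1
    · subst h2
      rw [S_eq2] at hx
      obtain ⟨q, rfl⟩ := hx
      rw [d_jj]
      exact zero_mem _
    · rw [S_other T c W Q' ε h1 h2] at hx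
      rw [Submodule.mem_bot] at hx
      subst hx
      rw [map_zero]
      exact zero_mem _

lemma S_exact : ∀ m : ℤ, ∀ y : T.P (m+1), y ∈ S T c W Q' ε (m+1) →
    y ∈ LinearMap.range (T.d m) → ∃ s ∈ S T c W Q' ε m, T.d m s = y := by
  intro m y hyS hyR
  by_cases h1 : m = c
  · subst h1
    rw [S_eq1] at hyS
    obtain ⟨q, rfl⟩ := hyS
    obtain ⟨u, hu⟩ := hyR
    have hq : q = 0 := by
      have h2 := rho_kk T m W Q' ε q
      rw [← hu, rho_d] at h2
      exact h2.symm
    subst hq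
    refine ⟨0, zero_mem _, ?_⟩
    rw [map_zero, map_zero]
  · by_cases h2 : m = c+1
    · subst h2
      rw [S_eq2] at hyS
      obtain ⟨q, rfl⟩ := hyS
      exact ⟨kk T c W Q' ε q, by rw [S_eq1]; exact ⟨q, rfl⟩, d_kk T c W Q' ε q⟩
    · rw [S_other T c W Q' ε (by omega) (by omega)] at hyS
      rw [Submodule.mem_bot] at hyS
      subst hyS
      exact ⟨0, zero_mem _, by rw [map_zero]⟩

noncomputable def Sd (n : ℤ) :
    (T.P n ⧸ S T c W Q' ε n) →ₗ[A] (T.P (n+1) ⧸ S T c W Q' ε (n+1)) :=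
  Submodule.mapQ _ _ (T.d n : T.P n →ₗ[A] T.P (n+1)) (fun x hx => hdS T c W Q' ε n x hx)

lemma Sd_mk (n : ℤ) (x : T.P n) :
    Sd T c W Q' ε n ((S T c W Q' ε n).mkQ x) = (S T c W Q' ε (n+1)).mkQ (T.d n x) := by
  simp [Sd, Submodule.mapQ_apply]

/-- projectivity of a quotient with split submodule -/
lemma proj_quot {M : Type u} [AddCommGroup M] [Module A M] [Module.Projective A M]
    (p : Submodule A M) (u : M →ₗ[A] M) (hu : p ≤ LinearMap.ker u)
    (hid : ∀ x, u x - x ∈ p) : Module.Projective A (M ⧸ p) := by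
  refine Module.Projective.of_split (Submodule.liftQ p u hu) p.mkQ ?_
  refine Submodule.linearMap_qext _ ?_
  refine LinearMap.ext fun x => ?_
  show p.mkQ (Submodule.liftQ p u hu (p.mkQ x)) = p.mkQ x
  have h1 : Submodule.liftQ p u hu (p.mkQ x) = u x := by
    simp [Submodule.liftQ_apply]
  rw [h1]
  rw [Submodule.mkQ_apply, Submodule.mkQ_apply, Submodule.Quotient.eq]
  exact hid x

noncomputable def strip : GPData A where
  P n := ModuleCat.of A (T.P n ⧸ S T c W Q' ε n)
  d n := Sd T c W Q' ε n
  fin n := by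
    have := T.fin n
    exact inferInstanceAs (Module.Finite A (T.P n ⧸ S T c W Q' ε n))
  proj n := by
    have := T.proj n
    by_cases h1 : n = c+1
    · subst h1
      refine proj_quot (S T c W Q' ε (c+1))
        (LinearMap.id - kk T c W Q' ε ∘ₗ rho T c W Q' ε) ?_ ?_
      · intro x hx
        rw [S_eq1] at hx
        obtain ⟨q, rfl⟩ := hx
        show kk T c W Q' ε q - kk T c W Q' ε (rho T c W Q' ε (kk T c W Q' ε q)) = 0
        rw [rho_kk, sub_self]
      · intro x
        show (x - kk T c W Q' ε (rho T c W Q' ε x)) - x ∈ _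
        rw [S_eq1]
        have : (x - kk T c W Q' ε (rho T c W Q' ε x)) - x
            = -(kk T c W Q' ε (rho T c W Q' ε x)) := by abel
        rw [this]
        exact neg_mem ⟨rho T c W Q' ε x, rfl⟩
    · by_cases h2 : n = c+1+1
      · subst h2
        refine proj_quot (S T c W Q' ε (c+1+1))
          (LinearMap.id - jj T c W Q' ε ∘ₗ rr T c W Q' ε) ?_ ?_
        · intro x hx
          rw [S_eq2] at hx
          obtain ⟨q, rfl⟩ := hx
          show jj T c W Q' ε q - jj T c W Q' ε (rr T c W Q' ε (jj T c W Q' ε q)) = 0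
          rw [rr_jj, sub_self]
        · intro x
          show (x - jj T c W Q' ε (rr T c W Q' ε x)) - x ∈ _
          rw [S_eq2]
          have : (x - jj T c W Q' ε (rr T c W Q' ε x)) - x
              = -(jj T c W Q' ε (rr T c W Q' ε x)) := by abel
          rw [this]
          exact neg_mem ⟨rr T c W Q' ε x, rfl⟩
      · refine proj_quot (S T c W Q' ε n) LinearMap.id ?_ ?_
        · rw [S_other T c W Q' ε h1 h2]
          intro x hx
          rw [Submodule.mem_bot] at hx
          subst hx
          rfl
        · intro x
          show x - x ∈ _
          rw [sub_self]
          exact zero_mem _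
  exact n := by
    apply le_antisymm
    · rintro _ ⟨p, rfl⟩
      obtain ⟨x, rfl⟩ := Submodule.mkQ_surjective _ p
      apply LinearMap.mem_ker.mpr
      show Sd T c W Q' ε (n+1) (Sd T c W Q' ε n ((S T c W Q' ε n).mkQ x)) = 0
      rw [Sd_mk, Sd_mk]
      have h1 : T.d (n+1) (T.d n x) = 0 := T.dd_apply n x
      rw [h1, map_zero]
    · intro p hp
      obtain ⟨x, rfl⟩ := Submodule.mkQ_surjective _ p
      have hp' : (S T c W Q' ε (n+1+1)).mkQ (T.d (n+1) x) = 0 := by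
        rw [← Sd_mk]
        exact hp
      rw [Submodule.mkQ_apply, Submodule.Quotient.mk_eq_zero] at hp'
      obtain ⟨s, hsS, hds⟩ := S_exact T c W Q' ε (n+1) (T.d (n+1) x) hp' ⟨x, rfl⟩
      have hxs : x - s ∈ LinearMap.range (T.d n) := by
        rw [T.exact n]
        show T.d (n+1) (x - s) = 0
        rw [map_sub, hds, sub_self]
      obtain ⟨u, hu⟩ := hxs
      refine ⟨(S T c W Q' ε n).mkQ u, ?_⟩
      show Sd T c W Q' ε n ((S T c W Q' ε n).mkQ u) = (S T c W Q' ε (n+1)).mkQ x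
      rw [Sd_mk, hu, map_sub]
      have h0 : (S T c W Q' ε (n+1)).mkQ s = 0 := by
        rw [Submodule.mkQ_apply, Submodule.Quotient.mk_eq_zero]
        exact hsS
      rw [h0, sub_zero]
  lift2 Q₀ hfQ hpQ n f hf := by
    haveI : Module.Finite A Q₀ := hfQ
    haveI : Module.Projective A Q₀ := hpQ
    set ft : T.P (n+1) →ₗ[A] Q₀ :=
      (f : (T.P (n+1) ⧸ S T c W Q' ε (n+1)) →ₗ[A] Q₀) ∘ₗ (S T c W Q' ε (n+1)).mkQ
      with hft
    have hdft : ∀ x : T.P n, ft (T.d n x) = 0 := by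
      intro x
      show f ((S T c W Q' ε (n+1)).mkQ (T.d n x)) = 0
      rw [← Sd_mk]
      exact congrArg (fun h => h ((S T c W Q' ε n).mkQ x)) hf
    have hkill1 : ∀ s ∈ S T c W Q' ε (n+1), ft s = 0 := by
      intro s hs
      show f ((S T c W Q' ε (n+1)).mkQ s) = 0
      have h0 : (S T c W Q' ε (n+1)).mkQ s = 0 := by
        rw [Submodule.mkQ_apply, Submodule.Quotient.mk_eq_zero]
        exact hs
      rw [h0, map_zero]
    obtain ⟨G, hG⟩ := lift2'' T n (V := Q₀) ft hdft
    have main : ∃ G' : T.P (n+1+1) →ₗ[A] Q₀,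
        (∀ s ∈ S T c W Q' ε (n+1+1), G' s = 0) ∧
        (∀ x : T.P (n+1), G' (T.d (n+1) x) = ft x) := by
      by_cases hA : c = n+1
      · subst hA
        refine ⟨G - (G ∘ₗ kk T (n+1) W Q' ε) ∘ₗ rho T (n+1) W Q' ε, ?_, ?_⟩
        · intro s hs
          rw [S_eq1] at hs
          obtain ⟨q, rfl⟩ := hs
          show G (kk T (n+1) W Q' ε q)
              - G (kk T (n+1) W Q' ε (rho T (n+1) W Q' ε (kk T (n+1) W Q' ε q))) = 0
          rw [rho_kk, sub_self]
        · intro x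
          show G (T.d (n+1) x)
              - G (kk T (n+1) W Q' ε (rho T (n+1) W Q' ε (T.d (n+1) x))) = ft x
          rw [rho_d, map_zero, map_zero, sub_zero, hG]
      · by_cases hB : c = n
        · subst hB
          refine ⟨G, ?_, fun x => hG x⟩
          intro s hs
          rw [S_eq2] at hs
          obtain ⟨q, rfl⟩ := hs
          rw [← d_kk, hG]
          refine hkill1 _ ?_
          rw [S_eq1]
          exact ⟨q, rfl⟩
        · refine ⟨G, ?_, fun x => hG x⟩
          intro s hs
          rw [S_other T c W Q' ε (by omega) (by omega)] at hs
          rw [Submodule.mem_bot] at hs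
          subst hs
          rw [map_zero]
    obtain ⟨G', hkill, hlift⟩ := main
    have hle : S T c W Q' ε (n+1+1) ≤ LinearMap.ker G' :=
      fun s hs => LinearMap.mem_ker.mpr (hkill s hs)
    refine ⟨Submodule.liftQ _ G' hle, ?_⟩
    refine LinearMap.ext fun p => ?_
    obtain ⟨x, rfl⟩ := Submodule.mkQ_surjective _ p
    show Submodule.liftQ _ G' hle (Sd T c W Q' ε (n+1) ((S T c W Q' ε (n+1)).mkQ x))
        = f ((S T c W Q' ε (n+1)).mkQ x)
    rw [Sd_mk]
    have h1 : Submodule.liftQ _ G' hle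
        ((S T c W Q' ε (n+1+1)).mkQ (T.d (n+1) x)) = G' (T.d (n+1) x) := by
      simp [Submodule.liftQ_apply]
    rw [h1, hlift, hft]
    rfl

noncomputable def beta : W →ₗ[A] ↥(LinearMap.ker (Sd T c W Q' ε (c+1+1))) :=
  LinearMap.codRestrict _
    ((S T c W Q' ε (c+1+1)).mkQ ∘ₗ (LinearMap.ker (T.d (c+1+1))).subtype
      ∘ₗ (ε : (W × Q') →ₗ[A] ↥(LinearMap.ker (T.d (c+1+1)))) ∘ₗ LinearMap.inl A W Q')
    (fun w => by
      apply LinearMap.mem_ker.mpr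
      show Sd T c W Q' ε (c+1+1)
        ((S T c W Q' ε (c+1+1)).mkQ ((ε (w, 0) : ↥(LinearMap.ker (T.d (c+1+1)))) : T.P (c+1+1))) = 0
      rw [Sd_mk]
      have h1 : T.d (c+1+1) ((ε (w, 0) : ↥(LinearMap.ker (T.d (c+1+1)))) : T.P (c+1+1)) = 0 :=
        (ε (w, 0)).2
      rw [h1, map_zero])

lemma beta_val (w : W) : ((beta T c W Q' ε w : ↥(LinearMap.ker (Sd T c W Q' ε (c+1+1)))) :
    (T.P (c+1+1) ⧸ S T c W Q' ε (c+1+1)))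
    = (S T c W Q' ε (c+1+1)).mkQ ((ε (w, 0) : ↥(LinearMap.ker (T.d (c+1+1)))) : T.P (c+1+1)) := rfl

lemma beta_inj : Function.Injective (beta T c W Q' ε) := by
  refine (injective_iff_map_eq_zero _).mpr ?_
  intro w hw
  have h2 : (S T c W Q' ε (c+1+1)).mkQ
      ((ε (w, 0) : ↥(LinearMap.ker (T.d (c+1+1)))) : T.P (c+1+1)) = 0 := by
    rw [← beta_val, hw]
    rfl
  rw [Submodule.mkQ_apply, Submodule.Quotient.mk_eq_zero, S_eq2] at h2
  obtain ⟨q, hq⟩ := h2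
  have h3 : ε (0, q) = ε (w, 0) := Subtype.ext hq
  have h4 : ((0 : W), q) = (w, (0 : Q')) := ε.injective h3
  exact (congrArg Prod.fst h4).symm

lemma beta_surj : Function.Surjective (beta T c W Q' ε) := by
  intro z
  obtain ⟨x, hx⟩ := Submodule.mkQ_surjective _
    (z : (T.P (c+1+1) ⧸ S T c W Q' ε (c+1+1)))
  have hz : Sd T c W Q' ε (c+1+1) (z : (T.P (c+1+1) ⧸ S T c W Q' ε (c+1+1))) = 0 := z.2
  rw [← hx, Sd_mk, Submodule.mkQ_apply, Submodule.Quotient.mk_eq_zero,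
    S_other T c W Q' ε (by omega) (by omega), Submodule.mem_bot] at hz
  set zz : ↥(LinearMap.ker (T.d (c+1+1))) := ⟨x, hz⟩ with hzz
  have hwq : ε ((ε.symm zz).1, (ε.symm zz).2) = zz := by
    rw [Prod.mk.eta]
    exact ε.apply_symm_apply zz
  refine ⟨(ε.symm zz).1, Subtype.ext ?_⟩
  rw [beta_val, ← hx]
  have h3 : ε ((ε.symm zz).1, 0) + ε (0, (ε.symm zz).2) = zz := by
    rw [← map_add]
    have h4 : (((ε.symm zz).1, (0:Q')) : W × Q') + ((0:W), (ε.symm zz).2)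
        = ((ε.symm zz).1, (ε.symm zz).2) := by
      rw [Prod.mk_add_mk, add_zero, zero_add]
    rw [h4]
    exact hwq
  have h5 : ((ε ((ε.symm zz).1, 0) : ↥(LinearMap.ker (T.d (c+1+1)))) : T.P (c+1+1))
      + jj T c W Q' ε (ε.symm zz).2 = x := by
    rw [jj_apply]
    exact congrArg Subtype.val h3
  rw [← h5, map_add]
  have h6 : (S T c W Q' ε (c+1+1)).mkQ (jj T c W Q' ε (ε.symm zz).2) = 0 := by
    rw [Submodule.mkQ_apply, Submodule.Quotient.mk_eq_zero, S_eq2]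
    exact ⟨_, rfl⟩
  rw [h6, add_zero]

end StripAux
end Strip

lemma GPData.exists_strip {A : Type u} [Ring A] (T : GPData A) (c : ℤ)
    (W Q' : Type u) [AddCommGroup W] [Module A W] [AddCommGroup Q'] [Module A Q']
    [Module.Finite A Q'] [Module.Projective A Q']
    (ε : (W × Q') ≃ₗ[A] ↥(LinearMap.ker (T.d (c+1+1)))) :
    ∃ T' : GPData A, Nonempty (W ≃ₗ[A] ↥(LinearMap.ker (T'.d (c+1+1)))) :=
  ⟨StripAux.strip T c W Q' ε,
    ⟨LinearEquiv.ofBijective (StripAux.beta T c W Q' ε)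
      ⟨StripAux.beta_inj T c W Q' ε, StripAux.beta_surj T c W Q' ε⟩⟩⟩


section ChainMap
variable {A : Type u} [Ring A] (X Y : GPData A)
  (G0 : ↥(LinearMap.ker (X.d 0)) →ₗ[A] Y.P 0)
  [∀ n : ℤ, Module.Finite A (X.P n)] [∀ n : ℤ, Module.Projective A (X.P n)]
  [∀ n : ℤ, Module.Finite A (Y.P n)] [∀ n : ℤ, Module.Projective A (Y.P n)]

namespace ChainAux

noncomputable def fNeg : X.P (-1) →ₗ[A] Y.P 0 :=
  G0 ∘ₗ LinearMap.codRestrict _ (X.d (-1) : X.P (-1) →ₗ[A] X.P 0)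
    (fun v => X.dd_apply (-1) v)

lemma fNeg_apply (v : X.P (-1)) :
    fNeg X Y G0 v = G0 ⟨X.d (-1) v, X.dd_apply (-1) v⟩ := rfl

lemma dNeg2_fNeg (u : X.P (-2)) : fNeg X Y G0 (X.d (-2) u) = 0 := by
  rw [fNeg_apply]
  have h1 : X.d (-1) (X.d (-2) u) = 0 := X.dd_apply (-2) u
  have h0 : (⟨X.d (-1) (X.d (-2) u), X.dd_apply (-1) (X.d (-2) u)⟩ :
      ↥(LinearMap.ker (X.d 0))) = 0 := Subtype.ext h1
  rw [h0, map_zero]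

noncomputable def spec0 :=
  X.lift2' (-2) (V := Y.P 0) (fNeg X Y G0) (fun u => dNeg2_fNeg X Y G0 u)

noncomputable def phi0 : X.P 0 →ₗ[A] Y.P 0 := (spec0 X Y G0).choose

lemma phi0_d (u : X.P (-1)) : phi0 X Y G0 (X.d (-1) u) = fNeg X Y G0 u :=
  (spec0 X Y G0).choose_spec u

lemma phi0_ker (z : ↥(LinearMap.ker (X.d 0))) : phi0 X Y G0 (z : X.P 0) = G0 z := by
  obtain ⟨u, hu⟩ := (X.exact (-1)).ge z.2
  rw [← hu, phi0_d, fNeg_apply]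
  exact congrArg G0 (Subtype.ext hu)

lemma d_phi0_d (hG : ∀ z, Y.d 0 (G0 z) = 0) (u : X.P (-1)) :
    Y.d 0 (phi0 X Y G0 (X.d (-1) u)) = 0 := by
  rw [phi0_d, fNeg_apply]
  exact hG _

noncomputable def g1 : X.P 0 →ₗ[A] Y.P 1 :=
  (Y.d 0 : Y.P 0 →ₗ[A] Y.P 1) ∘ₗ phi0 X Y G0

noncomputable def spec1 (hG : ∀ z, Y.d 0 (G0 z) = 0) :=
  X.lift2' (-1) (V := Y.P 1) (g1 X Y G0) (fun u => d_phi0_d X Y G0 hG u)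

noncomputable def phi1 (hG : ∀ z, Y.d 0 (G0 z) = 0) : X.P 1 →ₗ[A] Y.P 1 :=
  (spec1 X Y G0 hG).choose

lemma chain01 (hG : ∀ z, Y.d 0 (G0 z) = 0) (x : X.P 0) :
    phi1 X Y G0 hG (X.d 0 x) = Y.d 0 (phi0 X Y G0 x) :=
  (spec1 X Y G0 hG).choose_spec x

noncomputable def up (hG : ∀ z, Y.d 0 (G0 z) = 0) : ∀ k : ℕ,
    Σ' (a : X.P (Int.ofNat k) →ₗ[A] Y.P (Int.ofNat k))
      (b : X.P (Int.ofNat k + 1) →ₗ[A] Y.P (Int.ofNat k + 1)),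
      ∀ x, b (X.d (Int.ofNat k) x) = Y.d (Int.ofNat k) (a x)
  | 0 => ⟨phi0 X Y G0, phi1 X Y G0 hG, chain01 X Y G0 hG⟩
  | (k+1) =>
    let p := up hG k
    let h := X.lift2' (Int.ofNat k) (V := Y.P (Int.ofNat k + 1 + 1))
        ((Y.d (Int.ofNat k + 1) : Y.P (Int.ofNat k + 1) →ₗ[A] Y.P (Int.ofNat k + 1 + 1))
          ∘ₗ p.2.1) (fun x => by
          show Y.d (Int.ofNat k + 1) (p.2.1 (X.d (Int.ofNat k) x)) = 0
          rw [p.2.2 x]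
          exact Y.dd_apply (Int.ofNat k) _)
    ⟨p.2.1, h.choose, fun x => h.choose_spec x⟩

noncomputable def down (hG : ∀ z, Y.d 0 (G0 z) = 0) : ∀ k : ℕ,
    Σ' (prev : X.P (Int.negSucc k + 1) →ₗ[A] Y.P (Int.negSucc k + 1))
      (cur : X.P (Int.negSucc k) →ₗ[A] Y.P (Int.negSucc k)),
      ∀ x, prev (X.d (Int.negSucc k) x) = Y.d (Int.negSucc k) (cur x)
  | 0 =>
    let h := Y.lift_through (-1) (V := X.P (-1)) (fNeg X Y G0)
      (fun v => by
        show Y.d 0 (fNeg X Y G0 v) = 0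
        rw [fNeg_apply]
        exact hG _)
    ⟨phi0 X Y G0, h.choose, fun x => by
      show phi0 X Y G0 (X.d (-1) x) = Y.d (-1) (h.choose x)
      rw [phi0_d]
      exact (h.choose_spec x).symm⟩
  | (k+1) =>
    let p := down hG k
    let h := Y.lift_through (Int.negSucc (k+1)) (V := X.P (Int.negSucc (k+1)))
      (p.2.1 ∘ₗ (X.d (Int.negSucc (k+1)) : X.P (Int.negSucc (k+1)) →ₗ[A] X.P (Int.negSucc k)))
      (fun v => by
        show Y.d (Int.negSucc k) (p.2.1 (X.d (Int.negSucc (k+1)) v)) = 0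
        rw [← p.2.2]
        have h2 : X.d (Int.negSucc k) (X.d (Int.negSucc (k+1)) v) = 0 :=
          X.dd_apply (Int.negSucc (k+1)) v
        rw [h2, map_zero])
    ⟨p.2.1, h.choose, fun x => (h.choose_spec x).symm⟩

noncomputable def phi (hG : ∀ z, Y.d 0 (G0 z) = 0) : ∀ n : ℤ, X.P n →ₗ[A] Y.P n
  | .ofNat k => (up X Y G0 hG k).1
  | .negSucc k => (down X Y G0 hG k).2.1

lemma phi_zero (hG : ∀ z, Y.d 0 (G0 z) = 0) (z : ↥(LinearMap.ker (X.d 0))) :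
    phi X Y G0 hG 0 (z : X.P 0) = G0 z :=
  phi0_ker X Y G0 z

lemma phi_chain (hG : ∀ z, Y.d 0 (G0 z) = 0) : ∀ (n : ℤ) (x : X.P n),
    phi X Y G0 hG (n+1) (X.d n x) = Y.d n (phi X Y G0 hG n x) := by
  intro n
  match n with
  | .ofNat k => exact (up X Y G0 hG k).2.2
  | .negSucc 0 => exact (down X Y G0 hG 0).2.2
  | .negSucc (k+1) => exact (down X Y G0 hG (k+1)).2.2

end ChainAux

/-- Existence of a chain map extending a map on 0-cocycles (target-valued in cocycles). -/
lemma GPData.exists_chain_map (hG : ∀ z, Y.d 0 (G0 z) = 0) :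
    ∃ φ : ∀ n : ℤ, X.P n →ₗ[A] Y.P n,
      (∀ (n : ℤ) (x : X.P n), φ (n+1) (X.d n x) = Y.d n (φ n x)) ∧
      (∀ z : ↥(LinearMap.ker (X.d 0)), φ 0 (z : X.P 0) = G0 z) :=
  ⟨ChainAux.phi X Y G0 hG, ChainAux.phi_chain X Y G0 hG, ChainAux.phi_zero X Y G0 hG⟩

end ChainMap


section Cone
variable {A : Type u} [Ring A] (X Y : GPData A)
  (φ : ∀ n : ℤ, X.P n →ₗ[A] Y.P n)
  (hφ : ∀ (n : ℤ) (x : X.P n), φ (n+1) (X.d n x) = Y.d n (φ n x))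

namespace ConeAux

noncomputable def coneD (n : ℤ) :
    (X.P (n+1) × Y.P n) →ₗ[A] (X.P (n+1+1) × Y.P (n+1)) :=
  LinearMap.prod
    ((X.d (n+1) : X.P (n+1) →ₗ[A] X.P (n+1+1)) ∘ₗ LinearMap.fst A (X.P (n+1)) (Y.P n))
    ((φ (n+1)) ∘ₗ LinearMap.fst A (X.P (n+1)) (Y.P n)
      - (Y.d n : Y.P n →ₗ[A] Y.P (n+1)) ∘ₗ LinearMap.snd A (X.P (n+1)) (Y.P n))

lemma coneD_apply (n : ℤ) (u : X.P (n+1)) (v : Y.P n) :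
    coneD X Y φ n (u, v) = (X.d (n+1) u, φ (n+1) u - Y.d n v) := rfl

noncomputable def cone : GPData A where
  P n := ModuleCat.of A (X.P (n+1) × Y.P n)
  d n := coneD X Y φ n
  fin n := by
    have := X.fin (n+1); have := Y.fin n
    exact inferInstanceAs (Module.Finite A (X.P (n+1) × Y.P n))
  proj n := by
    have := X.proj (n+1); have := Y.proj n
    exact inferInstanceAs (Module.Projective A (X.P (n+1) × Y.P n))
  exact n := by
    apply le_antisymm
    · rintro _ ⟨⟨u, v⟩, rfl⟩
      apply LinearMap.mem_ker.mpr
      show coneD X Y φ (n+1) (X.d (n+1) u, φ (n+1) u - Y.d n v) = 0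
      rw [coneD_apply]
      have h1 : X.d (n+1+1) (X.d (n+1) u) = 0 := X.dd_apply (n+1) u
      have h2 : Y.d (n+1) (Y.d n v) = 0 := Y.dd_apply n v
      refine Prod.ext h1 ?_
      show φ (n+1+1) (X.d (n+1) u) - Y.d (n+1) (φ (n+1) u - Y.d n v) = 0
      rw [hφ (n+1) u, map_sub, h2, sub_zero, sub_self]
    · rintro ⟨x, y⟩ hxy
      have hxy' : coneD X Y φ (n+1) (x, y) = 0 := hxy
      rw [coneD_apply] at hxy'
      have h1 : X.d (n+1+1) x = 0 := congrArg Prod.fst hxy'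
      have h2 : φ (n+1+1) x - Y.d (n+1) y = 0 := congrArg Prod.snd hxy'
      have hx : x ∈ LinearMap.range (X.d (n+1)) := by
        rw [X.exact (n+1)]; exact h1
      obtain ⟨u, hu⟩ := hx
      have hw : φ (n+1) u - y ∈ LinearMap.range (Y.d n) := by
        rw [Y.exact n]
        show Y.d (n+1) (φ (n+1) u - y) = 0
        rw [map_sub, ← hφ (n+1) u, hu]
        exact h2
      obtain ⟨v, hv⟩ := hw
      refine ⟨(u, v), ?_⟩
      show coneD X Y φ n (u, v) = (x, y)
      rw [coneD_apply, hu, hv]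
      refine Prod.ext rfl ?_
      show φ (n+1) u - (φ (n+1) u - y) = y
      abel
  lift2 Q hfQ hpQ n f hf := by
    haveI : Module.Finite A Q := hfQ
    haveI : Module.Projective A Q := hpQ
    set f' : (X.P (n+1+1) × Y.P (n+1)) →ₗ[A] Q := f with hf'
    have hpt : ∀ (u : X.P (n+1)) (v : Y.P n),
        f' (X.d (n+1) u, φ (n+1) u - Y.d n v) = 0 := by
      intro u v
      have := congrArg (fun h => h (u, v)) hf
      simpa [coneD_apply] using this
    have hadd : ∀ (a : X.P (n+1+1)) (b : Y.P (n+1)),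
        f' (a, b) = f' (a, 0) + f' (0, b) := by
      intro a b
      rw [← map_add]
      norm_num
    have hB : ∀ v : Y.P n, f' (0, Y.d n v) = 0 := by
      intro v
      have h := hpt 0 (-v)
      rw [map_zero, map_zero] at h
      simpa using h
    have hA : ∀ u : X.P (n+1), f' (X.d (n+1) u, 0) + f' (0, φ (n+1) u) = 0 := by
      intro u
      have h := hpt u 0
      rw [map_zero, sub_zero] at h
      rw [← hadd]
      exact h
    set f₂ : Y.P (n+1) →ₗ[A] Q := f' ∘ₗ LinearMap.inr A (X.P (n+1+1)) (Y.P (n+1)) with hf₂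
    have sb := Y.lift2' n (V := Q) f₂ (fun v => hB v)
    set b := sb.choose with hbdef
    have hb : ∀ y : Y.P (n+1), b (Y.d (n+1) y) = f' (0, y) := sb.choose_spec
    set h : X.P (n+1+1) →ₗ[A] Q :=
      (f' ∘ₗ LinearMap.inl A (X.P (n+1+1)) (Y.P (n+1))) + b ∘ₗ φ (n+1+1) with hhdef
    have hh : ∀ u : X.P (n+1), h (X.d (n+1) u) = 0 := by
      intro u
      show f' (X.d (n+1) u, 0) + b (φ (n+1+1) (X.d (n+1) u)) = 0
      rw [hφ (n+1) u, hb]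
      exact hA u
    have sg := X.lift2' (n+1) (V := Q) h (fun u => hh u)
    set g₁ := sg.choose with hg₁def
    have hg₁ : ∀ x : X.P (n+1+1), g₁ (X.d (n+1+1) x) = h x := sg.choose_spec
    refine ⟨(g₁ ∘ₗ LinearMap.fst A (X.P (n+1+1+1)) (Y.P (n+1+1))
      - b ∘ₗ LinearMap.snd A (X.P (n+1+1+1)) (Y.P (n+1+1)) :
        (X.P (n+1+1+1) × Y.P (n+1+1)) →ₗ[A] Q), ?_⟩
    refine LinearMap.ext fun p => ?_
    obtain ⟨x, y⟩ := p
    show g₁ (X.d (n+1+1) x) - b (φ (n+1+1) x - Y.d (n+1) y) = f' (x, y)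
    rw [map_sub, hg₁, hb]
    show h x - (b (φ (n+1+1) x) - f' (0, y)) = f' (x, y)
    rw [hhdef]
    show f' (x, 0) + b (φ (n+1+1) x) - (b (φ (n+1+1) x) - f' (0, y)) = f' (x, y)
    rw [hadd x y]
    abel

lemma cone_P (n : ℤ) : (cone X Y φ hφ).P n = ModuleCat.of A (X.P (n+1) × Y.P n) := rfl

lemma cone_d_apply (n : ℤ) (u : X.P (n+1)) (v : Y.P n) :
    (cone X Y φ hφ).d n (u, v) = (X.d (n+1) u, φ (n+1) u - Y.d n v) := rfl

end ConeAux
end Cone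


/-- The class of finitely generated Gorenstein-projective modules over an artin algebra
is closed under kernels of epimorphisms. -/
theorem isFgGorensteinProjective_of_kernel_of_epi
    (R : Type u) [CommRing R] [IsArtinianRing R]
    (A : Type u) [Ring A] [Algebra R A] [Module.Finite R A]
    (M' M M'' : Type u)
    [AddCommGroup M'] [Module A M'] [Module.Finite A M']
    [AddCommGroup M] [Module A M] [Module.Finite A M]
    [AddCommGroup M''] [Module A M''] [Module.Finite A M'']
    (f : M' →ₗ[A] M) (g : M →ₗ[A] M'')
    (hf : Function.Injective f) (hg : Function.Surjective g)
    (hfg : LinearMap.range f = LinearMap.ker g)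
    (hM : IsFgGorensteinProjective A M) (h'' : IsFgGorensteinProjective A M'') :
    IsFgGorensteinProjective A M' := by
  obtain ⟨X, ⟨e⟩⟩ := GPData.ofIsFgGP M hM
  obtain ⟨Y, ⟨e''⟩⟩ := GPData.ofIsFgGP M'' h''
  haveI : ∀ n : ℤ, Module.Finite A (X.P n) := X.fin
  haveI : ∀ n : ℤ, Module.Projective A (X.P n) := X.proj
  haveI : ∀ n : ℤ, Module.Finite A (Y.P n) := Y.fin
  haveI : ∀ n : ℤ, Module.Projective A (Y.P n) := Y.proj
  set G0 : ↥(LinearMap.ker (X.d 0)) →ₗ[A] Y.P 0 :=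
    (LinearMap.ker (Y.d 0)).subtype
      ∘ₗ (e'' : M'' →ₗ[A] ↥(LinearMap.ker (Y.d 0)))
      ∘ₗ g ∘ₗ (e.symm : ↥(LinearMap.ker (X.d 0)) →ₗ[A] M) with hG0def
  have hG0 : ∀ z : ↥(LinearMap.ker (X.d 0)),
      G0 z = ((e'' (g (e.symm z)) : ↥(LinearMap.ker (Y.d 0))) : Y.P 0) := fun z => rfl
  have hG : ∀ z, Y.d 0 (G0 z) = 0 := fun z => (e'' (g (e.symm z))).2
  obtain ⟨φ, hφ, hφ0⟩ := GPData.exists_chain_map X Y G0 hG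
  set F : GPData A := ConeAux.cone X Y φ hφ with hFdef
  set p : Y.P (-1) →ₗ[A] M'' :=
    (e''.symm : ↥(LinearMap.ker (Y.d 0)) →ₗ[A] M'')
      ∘ₗ LinearMap.codRestrict _ (Y.d (-1) : Y.P (-1) →ₗ[A] Y.P 0)
        (fun q => Y.dd_apply (-1) q) with hpdef
  have hp : ∀ q : Y.P (-1),
      p q = e''.symm ⟨Y.d (-1) q, Y.dd_apply (-1) q⟩ := fun q => rfl
  obtain ⟨σ, hσ⟩ : ∃ σ : Y.P (-1) →ₗ[A] M, ∀ q, g (σ q) = p q := by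
    haveI : Module.Projective A (Y.P (-1)) := Y.proj (-1)
    obtain ⟨σ, hσ⟩ := Module.projective_lifting_property g p hg
    exact ⟨σ, fun q => congrArg (fun h => h q) hσ⟩
  have hgf : ∀ a : M', g (f a) = 0 := by
    intro a
    have : f a ∈ LinearMap.ker g := hfg ▸ ⟨a, rfl⟩
    exact this
  -- the underlying map of the cocycle identification
  set am : (M' × Y.P (-1)) →ₗ[A] (X.P 0 × Y.P (-1)) :=
    LinearMap.prod
      ((LinearMap.ker (X.d 0)).subtype
        ∘ₗ (e : M →ₗ[A] ↥(LinearMap.ker (X.d 0)))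
        ∘ₗ (f ∘ₗ LinearMap.fst A M' (Y.P (-1)) + σ ∘ₗ LinearMap.snd A M' (Y.P (-1))))
      (LinearMap.snd A M' (Y.P (-1))) with hamdef
  have ham : ∀ w : M' × Y.P (-1),
      am w = (((e (f w.1 + σ w.2) : ↥(LinearMap.ker (X.d 0))) : X.P 0), w.2) :=
    fun w => rfl
  have key : ∀ (u : X.P 0) (hu : X.d 0 u = 0),
      φ 0 u = ((e'' (g (e.symm ⟨u, hu⟩)) : ↥(LinearMap.ker (Y.d 0))) : Y.P 0) := by
    intro u hu
    have := hφ0 ⟨u, hu⟩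
    rw [this, hG0]
  set amF : (M' × Y.P (-1)) →ₗ[A] F.P (-1) :=
    (am : (M' × Y.P (-1)) →ₗ[A] F.P (-1)) with hamFdef
  have hamF2 : ∀ w : M' × Y.P (-1),
      amF w = ((((e (f w.1 + σ w.2) : ↥(LinearMap.ker (X.d 0))) : X.P 0), w.2) :
        X.P 0 × Y.P (-1)) := fun w => rfl
  have hmem : ∀ w : M' × Y.P (-1), amF w ∈ LinearMap.ker (F.d (-1)) := by
    intro w
    apply LinearMap.mem_ker.mpr
    rw [hamF2]
    show (ConeAux.cone X Y φ hφ).d (-1)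
      (((e (f w.1 + σ w.2) : ↥(LinearMap.ker (X.d 0))) : X.P 0), w.2) = 0
    rw [ConeAux.cone_d_apply X Y φ hφ (-1)]
    have h1 : X.d 0 ((e (f w.1 + σ w.2) : ↥(LinearMap.ker (X.d 0))) : X.P 0) = 0 :=
      (e (f w.1 + σ w.2)).2
    have h2 : φ 0 ((e (f w.1 + σ w.2) : ↥(LinearMap.ker (X.d 0))) : X.P 0)
        = Y.d (-1) w.2 := by
      rw [key _ h1]
      have h3 : e.symm ⟨((e (f w.1 + σ w.2) : ↥(LinearMap.ker (X.d 0))) : X.P 0), h1⟩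
          = f w.1 + σ w.2 := by
        have h4 : (⟨((e (f w.1 + σ w.2) : ↥(LinearMap.ker (X.d 0))) : X.P 0), h1⟩ :
            ↥(LinearMap.ker (X.d 0))) = e (f w.1 + σ w.2) := Subtype.ext rfl
        rw [h4, e.symm_apply_apply]
      rw [h3]
      rw [map_add]
      rw [hgf]
      simp only [zero_add]
      rw [hσ]
      rw [hp]
      have h5 : e'' (e''.symm ⟨Y.d (-1) w.2, Y.dd_apply (-1) w.2⟩)
          = ⟨Y.d (-1) w.2, Y.dd_apply (-1) w.2⟩ := e''.apply_symm_apply _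
      rw [h5]
    refine Prod.ext ?_ ?_
    · exact h1
    · exact sub_eq_zero.mpr h2
  set α : (M' × Y.P (-1)) →ₗ[A] ↥(LinearMap.ker (F.d (-1))) :=
    LinearMap.codRestrict _ amF hmem with hαdef
  have hαval : ∀ w : M' × Y.P (-1),
      ((α w : ↥(LinearMap.ker (F.d (-1)))) : F.P (-1)) = amF w := fun w => rfl
  have hinj : Function.Injective α := by
    refine (injective_iff_map_eq_zero _).mpr ?_
    intro w hw
    have h0 : amF w = 0 := by rw [← hαval, hw]; rfl
    rw [hamF2] at h0
    have h1 : w.2 = 0 :=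
      congrArg (fun t : X.P 0 × Y.P (-1) => t.2) h0
    have h2 : ((e (f w.1 + σ w.2) : ↥(LinearMap.ker (X.d 0))) : X.P 0) = 0 :=
      congrArg (fun t : X.P 0 × Y.P (-1) => t.1) h0
    have h3 : e (f w.1 + σ w.2) = 0 := Subtype.ext h2
    have h4 : f w.1 + σ w.2 = 0 := by
      have h5 := congrArg e.symm h3
      rw [e.symm_apply_apply, map_zero] at h5
      exact h5
    rw [h1, map_zero, add_zero] at h4
    have h6 : w.1 = 0 := hf (by rw [h4, map_zero])
    exact Prod.ext h6 h1
  have hsurj : Function.Surjective α := by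
    intro z
    obtain ⟨zz, hzz⟩ : ∃ zz : X.P 0 × Y.P (-1),
        ((z : ↥(LinearMap.ker (F.d (-1)))) : F.P (-1)) = zz :=
      ⟨((z : ↥(LinearMap.ker (F.d (-1)))) : F.P (-1)), rfl⟩
    have hzk : (ConeAux.cone X Y φ hφ).d (-1) (zz.1, zz.2) = 0 := by
      rw [Prod.mk.eta, ← hzz]
      exact z.2
    rw [ConeAux.cone_d_apply X Y φ hφ (-1)] at hzk
    have h1 : X.d 0 zz.1 = 0 :=
      congrArg (fun t : X.P (-1+1+1) × Y.P (-1+1) => t.1) hzk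
    have h2 : φ (-1+1) zz.1 - Y.d (-1) zz.2 = 0 :=
      congrArg (fun t : X.P (-1+1+1) × Y.P (-1+1) => t.2) hzk
    have h2' : φ 0 zz.1 = Y.d (-1) zz.2 := sub_eq_zero.mp h2
    have h3 := key zz.1 h1
    have h4 : ((e'' (g (e.symm ⟨zz.1, h1⟩)) : ↥(LinearMap.ker (Y.d 0))) : Y.P 0)
        = Y.d (-1) zz.2 := by
      rw [← h3]
      exact h2'
    have h5 : p zz.2 = g (e.symm ⟨zz.1, h1⟩) := by
      rw [hp]
      have h6 : (⟨Y.d (-1) zz.2, Y.dd_apply (-1) zz.2⟩ : ↥(LinearMap.ker (Y.d 0)))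
          = e'' (g (e.symm ⟨zz.1, h1⟩)) := Subtype.ext h4.symm
      rw [h6, e''.symm_apply_apply]
    have h7 : e.symm ⟨zz.1, h1⟩ - σ zz.2 ∈ LinearMap.range f := by
      rw [hfg]
      show g (e.symm ⟨zz.1, h1⟩ - σ zz.2) = 0
      rw [map_sub, hσ, h5, sub_self]
    obtain ⟨m1, hm1⟩ := h7
    refine ⟨(m1, zz.2), ?_⟩
    apply Subtype.ext
    rw [hαval, hamF2, hzz]
    refine Prod.ext ?_ ?_
    · show ((e (f m1 + σ zz.2) : ↥(LinearMap.ker (X.d 0))) : X.P 0) = zz.1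
      rw [hm1]
      have h8 : e.symm ⟨zz.1, h1⟩ - σ zz.2 + σ zz.2 = e.symm ⟨zz.1, h1⟩ := by abel
      rw [h8, e.apply_symm_apply]
    · rfl
  haveI : Module.Finite A (Y.P (-1)) := Y.fin (-1)
  haveI : Module.Projective A (Y.P (-1)) := Y.proj (-1)
  obtain ⟨T', ⟨eW⟩⟩ := GPData.exists_strip F (-3) M' (Y.P (-1))
    (LinearEquiv.ofBijective α ⟨hinj, hsurj⟩)
  obtain ⟨eq0⟩ := T'.shift_ker (-1)
  exact (T'.shift (-1)).toIsFgGP M' ⟨eW.trans eq0.symm⟩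
end

section
/- Let A be an artin algebra and M a finitely generated Gorenstein-projective left A-module. If Ext^1_A(G, M) = 0 for every finitely generated Gorenstein-projective A-module G, then M is projective. (Thus the relatively projective-injective objects of the Frobenius exact category of finitely generated Gorenstein-projective modules are exactly the finitely generated projective modules.) -/
open CategoryTheory DirectSum

universe u

/-- If `M` is a finitely generated Gorenstein-projective module such that
`Ext^1_A(G, M) = 0` (equivalently: every short exact sequence `0 → M → E → G → 0` splits)
for every finitely generated Gorenstein-projective module `G`, then `M` is projective. -/
theorem projective_of_fgGorensteinProjective_of_ext_vanishing
    (R : Type u) [CommRing R] [IsArtinianRing R]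
    (A : Type u) [Ring A] [Algebra R A] [Module.Finite R A]
    (M : Type u) [AddCommGroup M] [Module A M] [Module.Finite A M]
    (hM : IsFgGorensteinProjective A M)
    (hExt : ∀ (G E : Type u) [AddCommGroup G] [Module A G] [AddCommGroup E] [Module A E],
      ∀ (_ : Module.Finite A E), IsFgGorensteinProjective A G →
      ∀ (ι : M →ₗ[A] E) (π : E →ₗ[A] G),
        Function.Injective ι → Function.Surjective π →
        LinearMap.range ι = LinearMap.ker π →
        ∃ ρ : E →ₗ[A] M, ρ ∘ₗ ι = LinearMap.id) :
    Module.Projective A M := by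
  obtain ⟨P, d, hfin, hproj, hex, hlift, ⟨e⟩⟩ := hM
  -- The cosyzygy `G := ker (d (0+1))` is fg Gorenstein-projective, via the shifted complex.
  set G := (LinearMap.ker (d (0 + 1)).hom : Submodule A (P (0 + 1)))
  have hG : IsFgGorensteinProjective A G := by
    refine ⟨fun n => P (n + 1), fun n => d (n + 1), fun n => hfin (n + 1),
      fun n => hproj (n + 1), fun n => hex (n + 1), fun Q hQf hQp => ?_, ⟨LinearEquiv.refl _ _⟩⟩
    obtain ⟨h1, h2⟩ := hlift Q hQf hQp
    exact ⟨fun n f hf => h1 (n + 1) f hf, fun n f hf => h2 (n + 1) f hf⟩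
  -- The short exact sequence `0 → M → P 0 → G → 0`.
  have hmem : ∀ x : P 0, (d 0).hom x ∈ LinearMap.ker (d (0 + 1)).hom := by
    intro x
    rw [← hex 0]
    exact ⟨x, rfl⟩
  set π : P 0 →ₗ[A] G := LinearMap.codRestrict _ (d 0).hom hmem with hπ
  set ι : M →ₗ[A] P 0 := (LinearMap.ker (d 0).hom).subtype ∘ₗ (e : M →ₗ[A] LinearMap.ker (d 0).hom)
    with hι
  have hιinj : Function.Injective ι :=
    (Submodule.injective_subtype _).comp e.injective
  have hπsurj : Function.Surjective π := by
    rintro ⟨y, hy⟩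
    have hy' : y ∈ LinearMap.range (d 0).hom := by rw [hex 0]; exact hy
    obtain ⟨x, hx⟩ := hy'
    exact ⟨x, Subtype.ext hx⟩
  have hrange : LinearMap.range ι = LinearMap.ker π := by
    ext x
    constructor
    · rintro ⟨m, rfl⟩
      have : (e m : P 0) ∈ LinearMap.ker (d 0).hom := (e m).2
      exact Subtype.ext (by simp [π, ι])
      -- splitting gives retraction
    · intro hx
      have hx' : x ∈ LinearMap.ker (d 0).hom := by
        have := congrArg Subtype.val hx
        simpa [π] using this
      exact ⟨e.symm ⟨x, hx'⟩, by simp [ι]⟩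
  obtain ⟨ρ, hρ⟩ := hExt G (P 0) (hfin 0) hG ι π hιinj hπsurj hrange
  have : Module.Projective A (P 0) := hproj 0
  exact Module.Projective.of_split ι ρ hρ
end
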